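/- arXiv:2305.10671 — 8 statements merged into one kernel-verified Lean document; each statement's English description precedes it below -/
import Mathlib

section
/- Let $n$ be a positive integer and $q = 2^n$. For any $x \in \mathbb{F}_{q^4}^*$ with decomposition $x = x_1 x_2 x_3$ where $x_1 \in \mu_{q-1}$, $x_2 \in \mu_{q+1}$, $x_3 \in \mu_{q^2+1}$, and with $d = q^3 + q^2 + q - 1$, one has $x^d = x_1^2 x_2^{-2} x_3^{-2}$. -/
/-- If `x = x₁x₂x₃` with `x₁ ∈ μ_{q-1}`, `x₂ ∈ μ_{q+1}`, `x₃ ∈ μ_{q²+1}`,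
and `d = q³+q²+q-1`, then `x^d = x₁² x₂⁻² x₃⁻²`. -/
theorem stmt2 (n : ℕ) (hn : 0 < n) (q : ℕ) (hq : q = 2 ^ n)
    (K : Type*) [Field K] [Fintype K] (hK : Fintype.card K = q ^ 4)
    (d : ℕ) (hd : d = q ^ 3 + q ^ 2 + q - 1)
    (x x1 x2 x3 : K) (hx : x ≠ 0)
    (h1 : x1 ^ (q - 1) = 1) (h2 : x2 ^ (q + 1) = 1) (h3 : x3 ^ (q ^ 2 + 1) = 1)
    (hdec : x = x1 * x2 * x3) :
    x ^ d = x1 ^ 2 * (x2 ^ 2)⁻¹ * (x3 ^ 2)⁻¹ := by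
  have hq2 : 2 ≤ q := by
    subst hq
    calc 2 = 2 ^ 1 := rfl
    _ ≤ 2 ^ n := Nat.pow_le_pow_right (by norm_num) hn
  have hx1 : x1 ≠ 0 := by
    rintro rfl; rw [zero_pow (by omega)] at h1; exact one_ne_zero h1.symm
  have hx2 : x2 ≠ 0 := by
    rintro rfl; rw [zero_pow (by omega)] at h2; exact one_ne_zero h2.symm
  have hx3 : x3 ≠ 0 := by
    rintro rfl; rw [zero_pow (by positivity)] at h3; exact one_ne_zero h3.symm
  have hqc : 1 ≤ q ^ 3 + q ^ 2 + q := by nlinarith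
  have hd2 : d + 2 = (q + 1) * (q ^ 2 + 1) := by
    rw [hd]; zify [hqc]; ring
  have hd4 : d + 2 = (q - 1) * (q ^ 2 + 2 * q + 3) + 4 := by
    rw [hd]; zify [hqc, show 1 ≤ q by omega]; ring
  have e1 : x1 ^ (d + 2) = x1 ^ 4 := by
    rw [hd4, pow_add, pow_mul, h1, one_pow, one_mul]
  have e2 : x2 ^ (d + 2) = 1 := by rw [hd2, pow_mul, h2, one_pow]
  have e3 : x3 ^ (d + 2) = 1 := by rw [hd2, mul_comm, pow_mul, h3, one_pow]
  have f1 : x1 ^ d = x1 ^ 2 :=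
    mul_right_cancel₀ (pow_ne_zero 2 hx1) (by rw [← pow_add, e1]; ring)
  have f2 : x2 ^ d = (x2 ^ 2)⁻¹ :=
    eq_inv_of_mul_eq_one_left (by rw [mul_comm, ← pow_add, add_comm, e2])
  have f3 : x3 ^ d = (x3 ^ 2)⁻¹ :=
    eq_inv_of_mul_eq_one_left (by rw [mul_comm, ← pow_add, add_comm, e3])
  rw [hdec, mul_pow, mul_pow, f1, f2, f3]
end

section
/- Let $n$ be a positive integer, $q = 2^n$, and $a \in \mathbb{F}_{q^2}^*$. The equation $x + x^{-1} = a$ has two distinct solutions in $\mu_{q^2+1} \setminus \{1\}$ (the $(q^2+1)$-th roots of unity in $\mathbb{F}_{q^4}$, excluding $1$) if and only if $\mathrm{Tr}_2^{q^2}(1/a) = 1$. -/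
private lemma aux_iter {K : Type*} [Field K] [CharP K 2] {y c : K} (h : y ^ 2 + y = c) (m : ℕ) :
    y ^ 2 ^ m = y + ∑ i ∈ Finset.range m, c ^ 2 ^ i := by
  induction m with
  | zero => simp
  | succ m ih =>
    have h2 : y ^ 2 ^ (m + 1) = (y ^ 2 ^ m) ^ 2 := by rw [← pow_mul, pow_succ]
    have hy2 : y ^ 2 = y + c := by
      have h3 := CharTwo.add_self_eq_zero y
      linear_combination h - h3
    rw [h2, ih, CharTwo.add_sq, CharTwo.sum_sq, hy2, Finset.sum_range_succ']
    simp only [← pow_mul, ← pow_succ, pow_zero, pow_one]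
    ring

private lemma aux_surj {K : Type*} [Field K] [Fintype K] [CharP K 2] (m : ℕ) (hm : 0 < m)
    (hcard : Fintype.card K = 2 ^ m) (c : K)
    (hc : ∑ i ∈ Finset.range m, c ^ 2 ^ i = 0) : ∃ y : K, y ^ 2 + y = c := by
  classical
  haveI : Fact (Nat.Prime 2) := ⟨Nat.prime_two⟩
  set f : K → K := fun y => y ^ 2 + y with hf
  set g : K → K := fun z => ∑ i ∈ Finset.range m, z ^ 2 ^ i with hg
  have hfib : ∀ v ∈ Finset.univ.image f, (Finset.univ.filter (fun y : K => f y = v)).card ≤ 2 := by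
    intro v hv
    obtain ⟨y₀, -, hy₀⟩ := Finset.mem_image.mp hv
    have hsub : Finset.univ.filter (fun y : K => f y = v) ⊆ {y₀, y₀ + 1} := by
      intro y hy
      rw [Finset.mem_filter] at hy
      have h1 : f y = f y₀ := by rw [hy.2, hy₀]
      have h2 : (y + y₀) * ((y + y₀) + 1) = 0 := by
        have h3 := CharTwo.add_self_eq_zero (y * y₀)
        have h4 := CharTwo.add_self_eq_zero (y₀ ^ 2 + y₀)
        simp only [hf] at h1
        linear_combination h1 + h3 + h4
      rcases mul_eq_zero.mp h2 with h | h
      · have : y = -y₀ := eq_neg_of_add_eq_zero_left h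
        rw [CharTwo.neg_eq] at this
        simp [this]
      · have : y + y₀ = -1 := eq_neg_of_add_eq_zero_left h
        rw [CharTwo.neg_eq] at this
        have hy' : y = y₀ + 1 := by linear_combination this - CharTwo.add_self_eq_zero y₀
        simp [hy']
    calc (Finset.univ.filter (fun y : K => f y = v)).card ≤ ({y₀, y₀ + 1} : Finset K).card :=
          Finset.card_le_card hsub
      _ ≤ 2 := by
          refine le_trans (Finset.card_insert_le _ _) ?_
          simp
  have h1 : 2 ^ m ≤ 2 * (Finset.univ.image f).card := by
    have := Finset.card_le_mul_card_image (f := f) Finset.univ 2 hfib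
    rwa [Finset.card_univ, hcard] at this
  have himg : Finset.univ.image f ⊆ Finset.univ.filter (fun z => g z = 0) := by
    intro v hv
    obtain ⟨y, -, rfl⟩ := Finset.mem_image.mp hv
    simp only [Finset.mem_filter, Finset.mem_univ, true_and, hg, hf]
    have hstep : ∀ i : ℕ, (y ^ 2 + y) ^ 2 ^ i = y ^ 2 ^ (i + 1) - y ^ 2 ^ i := by
      intro i
      rw [CharTwo.sub_eq_add, add_pow_char_pow (p := 2), ← pow_mul, ← pow_succ']
    calc ∑ i ∈ Finset.range m, (y ^ 2 + y) ^ 2 ^ i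
        = ∑ i ∈ Finset.range m, (y ^ 2 ^ (i + 1) - y ^ 2 ^ i) := by simp_rw [hstep]
      _ = y ^ 2 ^ m - y ^ 2 ^ 0 := Finset.sum_range_sub (fun i => y ^ 2 ^ i) m
      _ = 0 := by rw [← hcard, FiniteField.pow_card, pow_zero, pow_one, sub_self]
  have hker : (Finset.univ.filter (fun z => g z = 0)).card ≤ 2 ^ (m - 1) := by
    set P : Polynomial K := ∑ i ∈ Finset.range m, Polynomial.X ^ 2 ^ i with hP
    have hco : P.coeff 1 = 1 := by
      rw [hP, Polynomial.finset_sum_coeff]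
      rw [Finset.sum_eq_single 0]
      · simp
      · intro i hi h0
        rw [Polynomial.coeff_X_pow]
        have h2i : 2 ≤ 2 ^ i := by
          calc (2:ℕ) = 2 ^ 1 := by norm_num
            _ ≤ 2 ^ i := Nat.pow_le_pow_right (by norm_num) (by omega)
        have : (1:ℕ) ≠ 2 ^ i := by omega
        simp [this]
      · intro h0
        exact absurd (Finset.mem_range.mpr hm) h0
    have hPne : P ≠ 0 := by
      intro h
      rw [h] at hco
      simp at hco
    have hdeg : P.natDegree ≤ 2 ^ (m - 1) := by
      apply Polynomial.natDegree_sum_le_of_forall_le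
      intro i hi
      rw [Polynomial.natDegree_X_pow]
      exact Nat.pow_le_pow_right (by norm_num) (by rw [Finset.mem_range] at hi; omega)
    have hsub : Finset.univ.filter (fun z => g z = 0) ⊆ P.roots.toFinset := by
      intro z hz
      rw [Finset.mem_filter] at hz
      rw [Multiset.mem_toFinset, Polynomial.mem_roots hPne]
      have hev : P.eval z = g z := by
        rw [hP, Polynomial.eval_finset_sum]
        simp [hg]
      simpa [Polynomial.IsRoot, hev] using hz.2
    calc (Finset.univ.filter (fun z => g z = 0)).card
        ≤ P.roots.toFinset.card := Finset.card_le_card hsub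
      _ ≤ Multiset.card P.roots := Multiset.toFinset_card_le _
      _ ≤ P.natDegree := Polynomial.card_roots' P
      _ ≤ 2 ^ (m - 1) := hdeg
  have heq : Finset.univ.image f = Finset.univ.filter (fun z => g z = 0) := by
    apply Finset.eq_of_subset_of_card_le himg
    have hmm : 2 ^ m = 2 * 2 ^ (m - 1) := by
      rw [← pow_succ']
      congr 1
      omega
    have h2 : 2 ^ (m - 1) ≤ (Finset.univ.image f).card := by
      rw [hmm] at h1
      exact Nat.le_of_mul_le_mul_left h1 (by norm_num)
    exact le_trans hker h2
  have hcG : c ∈ Finset.univ.filter (fun z => g z = 0) := by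
    simp only [Finset.mem_filter, Finset.mem_univ, true_and, hg]
    exact hc
  rw [← heq] at hcG
  obtain ⟨y, -, hy⟩ := Finset.mem_image.mp hcG
  exact ⟨y, hy⟩

/-- For `a ∈ 𝔽_{q²}ˣ ⊆ 𝔽_{q⁴}`, the equation `x + x⁻¹ = a` has two distinct
solutions in `μ_{q²+1} \ {1}` iff `Tr_2^{q²}(1/a) = 1`. -/
theorem stmt4 (n : ℕ) (hn : 0 < n) (q : ℕ) (hq : q = 2 ^ n)
    (K : Type*) [Field K] [Fintype K] (hK : Fintype.card K = q ^ 4)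
    (a : K) (ha : a ≠ 0) (ha2 : a ^ q ^ 2 = a) :
    {x : K | x ^ (q ^ 2 + 1) = 1 ∧ x ≠ 1 ∧ x + x⁻¹ = a}.ncard = 2 ↔
      (∑ i ∈ Finset.range (2 * n), a⁻¹ ^ 2 ^ i) = 1 := by
  classical
  subst hq
  -- characteristic 2
  haveI hp2 : CharP K 2 := by
    obtain ⟨p, hpc⟩ := CharP.exists K
    haveI := hpc
    obtain ⟨m, hprime, hcm⟩ := FiniteField.card K p
    have hp2' : p = 2 := by
      have hdvd : p ∣ 2 ^ (n * 4) := by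
        rw [pow_mul, ← hK, hcm]
        exact dvd_pow_self p m.pos.ne'
      have := hprime.dvd_of_dvd_pow hdvd
      exact (Nat.prime_dvd_prime_iff_eq hprime Nat.prime_two).mp this
    rwa [hp2'] at hpc
  haveI : Fact (Nat.Prime 2) := ⟨Nat.prime_two⟩
  have hq2 : (2 ^ n) ^ 2 = 2 ^ (2 * n) := by rw [← pow_mul]; ring_nf
  have hcard : Fintype.card K = 2 ^ (4 * n) := by rw [hK, ← pow_mul]; ring_nf
  have ha2' : a ^ 2 ^ (2 * n) = a := by rw [← hq2]; exact ha2
  have hb : (a⁻¹ : K) ≠ 0 := inv_ne_zero ha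
  have hbq : (a⁻¹ : K) ^ 2 ^ (2 * n) = a⁻¹ := by rw [inv_pow, ha2']
  set T : K := ∑ i ∈ Finset.range (2 * n), a⁻¹ ^ 2 ^ i with hT
  -- shifted trace sum
  have hshift : ∑ i ∈ Finset.range (2 * n), a⁻¹ ^ 2 ^ (i + 1) = T := by
    have e1 := Finset.sum_range_succ (fun i => (a⁻¹ : K) ^ 2 ^ i) (2 * n)
    have e2 := Finset.sum_range_succ' (fun i => (a⁻¹ : K) ^ 2 ^ i) (2 * n)
    rw [e1] at e2
    simp only [pow_zero, pow_one, hbq, ← hT] at e2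
    exact add_right_cancel e2.symm
  have hTsq : T ^ 2 = T := by
    rw [hT, CharTwo.sum_sq]
    simp only [← pow_mul, ← pow_succ]
    exact hshift
  have hsum2 : ∑ i ∈ Finset.range (2 * n), ((a⁻¹ : K) ^ 2) ^ 2 ^ i = T := by
    simp only [← pow_mul, ← pow_succ']
    exact hshift
  -- any root of x² + a x = 1 satisfies x^{q²} = x + a T
  have hroot : ∀ x : K, x ≠ 0 → x ^ 2 + a * x = 1 → x ^ 2 ^ (2 * n) = x + a * T := by
    intro x hx0 hx
    have hy : (x * a⁻¹) ^ 2 + x * a⁻¹ = (a⁻¹) ^ 2 := by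
      have h1 : (x * a⁻¹) ^ 2 + x * a⁻¹ = (a⁻¹) ^ 2 * (x ^ 2 + a * x) := by
        field_simp
      rw [h1, hx, mul_one]
    have hit := aux_iter hy (2 * n)
    rw [hsum2] at hit
    have hx2 : x ^ 2 ^ (2 * n) = (x * a⁻¹) ^ 2 ^ (2 * n) * a ^ 2 ^ (2 * n) := by
      rw [← mul_pow, mul_assoc, inv_mul_cancel₀ ha, mul_one]
    rw [hx2, hit, ha2', add_mul, mul_assoc, inv_mul_cancel₀ ha, mul_one, mul_comm T a]
  have hTdich : T = 0 ∨ T = 1 := by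
    have h2 : T * (T - 1) = 0 := by linear_combination hTsq
    rcases mul_eq_zero.mp h2 with h | h
    · exact Or.inl h
    · exact Or.inr (by linear_combination h)
  have hquadOf : ∀ z : K, z ≠ 0 → z + z⁻¹ = a → z ^ 2 + a * z = 1 := by
    intro z hz0 hza
    have h1 : (z + z⁻¹) * z = a * z := by rw [hza]
    rw [add_mul, inv_mul_cancel₀ hz0] at h1
    have h2 := CharTwo.add_self_eq_zero (z * z)
    linear_combination h2 - h1
  rw [hq2]
  constructor
  · intro h2
    obtain ⟨x, hx1, hxne, hxa⟩ := Set.nonempty_of_ncard_ne_zero (by rw [h2]; norm_num)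
    have hx0 : x ≠ 0 := by
      rintro rfl
      rw [zero_pow (by positivity)] at hx1
      exact zero_ne_one hx1
    have hquad := hquadOf x hx0 hxa
    have hxq := hroot x hx0 hquad
    have hxinv : x ^ 2 ^ (2 * n) * x = 1 := by rw [← pow_succ]; exact hx1
    rcases hTdich with h0 | h1
    · exfalso
      rw [h0, mul_zero, add_zero] at hxq
      rw [hxq] at hxinv
      apply hxne
      have h3 : (x + 1) ^ 2 = 0 := by
        rw [CharTwo.add_sq, one_pow, sq, hxinv]
        exact CharTwo.add_self_eq_zero 1
      have h4 : x + 1 = 0 := by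
        exact pow_eq_zero_iff (n := 2) (by norm_num) |>.mp h3
      have h5 : x = -1 := eq_neg_of_add_eq_zero_left h4
      rwa [CharTwo.neg_eq] at h5
    · exact h1
  · intro hT1
    have hsum4 : ∑ i ∈ Finset.range (4 * n), (a⁻¹ : K) ^ 2 ^ i = 0 := by
      have h44 : 4 * n = 2 * n + 2 * n := by ring
      rw [h44, Finset.sum_range_add]
      have hsh : ∀ i : ℕ, (a⁻¹ : K) ^ 2 ^ (2 * n + i) = a⁻¹ ^ 2 ^ i := by
        intro i
        rw [pow_add, pow_mul, hbq]
      simp only [hsh, ← hT]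
      exact CharTwo.add_self_eq_zero T
    obtain ⟨y₀, hy₀⟩ := aux_surj (4 * n) (by omega) hcard a⁻¹ hsum4
    have hy : (y₀ ^ 2) ^ 2 + y₀ ^ 2 = (a⁻¹) ^ 2 := by rw [← CharTwo.add_sq, hy₀]
    set x := a * y₀ ^ 2 with hxdef
    have hquad : x ^ 2 + a * x = 1 := by
      have h1 : x ^ 2 + a * x = a ^ 2 * ((y₀ ^ 2) ^ 2 + y₀ ^ 2) := by rw [hxdef]; ring
      rw [h1, hy]
      field_simp
    have hx0 : x ≠ 0 := by
      intro h
      rw [h] at hquad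
      simp at hquad
    have hxq := hroot x hx0 hquad
    rw [hT1, mul_one] at hxq
    have hxinv : x⁻¹ = x + a := by
      have h1 : x * (x + a) = 1 := by linear_combination hquad
      exact (eq_inv_of_mul_eq_one_right h1).symm
    have hxne1 : x ≠ 1 := by
      intro h
      rw [h, inv_one] at hxinv
      exact ha (by linear_combination -hxinv)
    have hxx : x ≠ x⁻¹ := by
      intro h
      rw [hxinv] at h
      exact ha (by linear_combination -h)
    have hx1 : x ^ (2 ^ (2 * n) + 1) = 1 := by
      rw [pow_succ, hxq, ← hxinv, inv_mul_cancel₀ hx0]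
    have hSeq : {x' : K | x' ^ (2 ^ (2 * n) + 1) = 1 ∧ x' ≠ 1 ∧ x' + x'⁻¹ = a} =
        {x, x⁻¹} := by
      ext z
      simp only [Set.mem_setOf_eq, Set.mem_insert_iff, Set.mem_singleton_iff]
      constructor
      · rintro ⟨hz1, hzne, hza⟩
        have hz0 : z ≠ 0 := by
          rintro rfl
          rw [zero_pow (by positivity)] at hz1
          exact zero_ne_one hz1
        have hzq := hquadOf z hz0 hza
        have hzx : (z + x) * ((z + x) + a) = 0 := by
          have h2 := CharTwo.add_self_eq_zero (z * x)
          have h4 := CharTwo.add_self_eq_zero (1 : K)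
          linear_combination hzq + hquad + h2 + h4
        rcases mul_eq_zero.mp hzx with h | h
        · left
          have := eq_neg_of_add_eq_zero_left h
          rwa [CharTwo.neg_eq] at this
        · right
          rw [add_assoc] at h
          have := eq_neg_of_add_eq_zero_left h
          rw [CharTwo.neg_eq] at this
          rw [hxinv]
          exact this
      · rintro (rfl | rfl)
        · refine ⟨hx1, hxne1, ?_⟩
          rw [hxinv]
          linear_combination CharTwo.add_self_eq_zero x
        · refine ⟨?_, ?_, ?_⟩
          · rw [inv_pow, hx1, inv_one]
          · intro h
            rw [inv_eq_one] at h
            exact hxne1 h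
          · rw [inv_inv, hxinv]
            linear_combination CharTwo.add_self_eq_zero x
    rw [hSeq]
    exact Set.ncard_pair hxx
end

section
/- Let $n$ be a positive integer and $q = 2^n$. Define $\Phi(x) = x + x^{-1}$ for $x \in \mathbb{F}_{q^4}^*$. Then the image of $\mu_{q+1} \setminus \{1\}$ under $\Phi$ equals $\{a \in \mathbb{F}_q^* : \mathrm{Tr}_2^q(1/a) = 1\}$, and the image of $\mathbb{F}_q^* \setminus \{1\}$ under $\Phi$ equals $\{a \in \mathbb{F}_q^* : \mathrm{Tr}_2^q(1/a) = 0\}$. -/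
open Finset Polynomial

namespace Stmt6Aux

variable {K : Type*} [Field K] [CharP K 2]

lemma two0 : (2 : K) = 0 := CharTwo.two_eq_zero

lemma tele (m : ℕ) (u : K) :
    ∑ i ∈ range m, (u ^ 2 + u) ^ 2 ^ i = u ^ 2 ^ m + u := by
  induction m with
  | zero => simp [CharTwo.add_self_eq_zero]
  | succ m ih =>
      rw [sum_range_succ, ih, add_pow_char_pow]
      have h1 : (u ^ 2) ^ 2 ^ m = (u ^ 2 ^ m) ^ 2 := by
        rw [← pow_mul, ← pow_mul, mul_comm]
      have h2 : u ^ 2 ^ (m + 1) = (u ^ 2 ^ m) ^ 2 := by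
        rw [← pow_mul, pow_succ]
      rw [h1, h2]
      linear_combination (u ^ 2 ^ m) * (two0 (K := K))

lemma fiber {y y0 : K} (h : y ^ 2 + y = y0 ^ 2 + y0) : y = y0 ∨ y = y0 + 1 := by
  have h2 : (y + y0) * (y + y0 + 1) = 0 := by
    linear_combination h + (y0 ^ 2 + y0 + y * y0) * (two0 (K := K))
  rcases mul_eq_zero.mp h2 with hc | hc
  · left; linear_combination hc - y0 * (two0 (K := K))
  · right; linear_combination hc - (y0 + 1) * (two0 (K := K))

lemma solv [Fintype K] {N : ℕ} (hN : 0 < N) (hcard : Fintype.card K = 2 ^ N)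
    (b : K) (hb : ∑ i ∈ range N, b ^ 2 ^ i = 0) : ∃ y : K, y ^ 2 + y = b := by
  classical
  set f : K → K := fun y => y ^ 2 + y with hf
  set A : Finset K := Finset.image f Finset.univ with hA
  set B : Finset K := Finset.univ.filter (fun c => ∑ i ∈ range N, c ^ 2 ^ i = 0) with hB
  have hAB : A ⊆ B := by
    intro a ha
    rw [hA, Finset.mem_image] at ha
    obtain ⟨y, -, rfl⟩ := ha
    rw [hB, Finset.mem_filter]
    refine ⟨Finset.mem_univ _, ?_⟩
    rw [hf]
    simp only
    rw [tele]
    have : y ^ 2 ^ N = y := by rw [← hcard, FiniteField.pow_card]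
    rw [this, CharTwo.add_self_eq_zero]
  -- cardinality of A
  have hcA : 2 ^ N = 2 * A.card := by
    have h1 : (Finset.univ : Finset K).card
        = ∑ a ∈ A, (Finset.univ.filter (fun y => f y = a)).card := by
      apply Finset.card_eq_sum_card_fiberwise
      intro x _
      exact Finset.mem_image_of_mem f (Finset.mem_univ x)
    have h2 : ∀ a ∈ A, (Finset.univ.filter (fun y => f y = a)).card = 2 := by
      intro a ha
      rw [hA, Finset.mem_image] at ha
      obtain ⟨y0, -, rfl⟩ := ha
      have : Finset.univ.filter (fun y => f y = f y0) = {y0, y0 + 1} := by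
        ext y
        simp only [Finset.mem_filter, Finset.mem_univ, true_and, Finset.mem_insert,
          Finset.mem_singleton]
        constructor
        · intro h; exact fiber h
        · rintro (rfl | rfl)
          · rfl
          · rw [hf]; simp only
            linear_combination (y0 + 1) * (two0 (K := K))
      rw [this, Finset.card_insert_of_notMem, Finset.card_singleton]
      simp only [Finset.mem_singleton]
      intro h
      have h1 : (1 : K) = 0 := (left_eq_add.mp h)
      exact one_ne_zero h1
    rw [Finset.card_univ, hcard] at h1
    rw [h1, Finset.sum_congr rfl h2, Finset.sum_const, smul_eq_mul, mul_comm]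
  -- cardinality of B
  have hcB : B.card ≤ 2 ^ (N - 1) := by
    set p : K[X] := ∑ i ∈ range N, (X : K[X]) ^ 2 ^ i with hp
    have hpne : p ≠ 0 := by
      intro h
      have hc : p.coeff 1 = 1 := by
        rw [hp, finset_sum_coeff]
        rw [Finset.sum_eq_single_of_mem 0 (Finset.mem_range.mpr hN)]
        · simp
        · intro i _ hi
          rw [coeff_X_pow]
          have : 2 ^ i ≠ 1 := Nat.ne_of_gt (Nat.one_lt_two_pow_iff.mpr hi)
          simp [this.symm]
      rw [h] at hc
      simp at hc
    have hdeg : p.natDegree ≤ 2 ^ (N - 1) := by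
      apply Polynomial.natDegree_sum_le_of_forall_le
      intro i hi
      rw [natDegree_X_pow]
      exact Nat.pow_le_pow_right (by norm_num) (by have := Finset.mem_range.mp hi; omega)
    have hBsub : B ⊆ p.roots.toFinset := by
      intro c hc
      rw [hB, Finset.mem_filter] at hc
      rw [Multiset.mem_toFinset, mem_roots hpne]
      rw [IsRoot.def, hp]
      simp only [eval_finset_sum, eval_pow, eval_X]
      exact hc.2
    calc B.card ≤ p.roots.toFinset.card := Finset.card_le_card hBsub
      _ ≤ Multiset.card p.roots := p.roots.toFinset_card_le
      _ ≤ p.natDegree := p.card_roots'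
      _ ≤ 2 ^ (N - 1) := hdeg
  have hAcard : A.card = 2 ^ (N - 1) := by
    have : 2 * A.card = 2 * 2 ^ (N - 1) := by
      rw [← hcA, ← pow_succ']
      congr 1
      omega
    omega
  have hEq : A = B := Finset.eq_of_subset_of_card_le hAB (by rw [hAcard]; exact hcB)
  have hbB : b ∈ B := by rw [hB, Finset.mem_filter]; exact ⟨Finset.mem_univ _, hb⟩
  rw [← hEq, hA, Finset.mem_image] at hbB
  obtain ⟨y, -, hy⟩ := hbB
  exact ⟨y, hy⟩

lemma add_one_ne {x : K} (hx1 : x ≠ 1) : x + 1 ≠ 0 := by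
  intro h; apply hx1; linear_combination h - two0 (K := K)

lemma a_ne {x : K} (hx0 : x ≠ 0) (hx1 : x ≠ 1) : x + x⁻¹ ≠ 0 := by
  intro h
  have h2 : x * x + 1 = 0 := by
    have h3 := congrArg (x * ·) h
    simpa [mul_add, mul_inv_cancel₀ hx0] using h3
  apply hx1
  have h3 : (x + 1) ^ 2 = 0 := by linear_combination h2 + x * (two0 (K := K))
  have h4 : x + 1 = 0 := by
    exact pow_eq_zero_iff (by norm_num) |>.mp h3
  linear_combination h4 - two0 (K := K)

lemma inv_a {x : K} (hx0 : x ≠ 0) (hx1 : x ≠ 1) :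
    (x + x⁻¹)⁻¹ = ((x + 1)⁻¹) ^ 2 + (x + 1)⁻¹ := by
  have h1 : x + 1 ≠ 0 := add_one_ne hx1
  apply inv_eq_of_mul_eq_one_right
  field_simp
  ring_nf
  linear_combination (two0 (K := K))

lemma trace_eq (m : ℕ) {x : K} (hx0 : x ≠ 0) (hx1 : x ≠ 1) :
    ∑ i ∈ range m, ((x + x⁻¹)⁻¹) ^ 2 ^ i = (x ^ 2 ^ m + 1)⁻¹ + (x + 1)⁻¹ := by
  rw [inv_a hx0 hx1, tele]
  congr 2
  rw [inv_pow, ← one_pow (2 ^ m) (M := K), ← add_pow_char_pow]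
  rw [one_pow]

lemma pow_pow_self {b : K} {n : ℕ} (hb : b ^ 2 ^ n = b) (k : ℕ) :
    b ^ 2 ^ (k * n) = b := by
  induction k with
  | zero => simp
  | succ k ih =>
      have : (k + 1) * n = k * n + n := by ring
      rw [this, pow_add, pow_mul, ih, hb]

lemma sum_four {n : ℕ} {b : K} (hb : b ^ 2 ^ n = b) :
    ∑ i ∈ range (4 * n), b ^ 2 ^ i = 0 := by
  have hblock : ∀ k, ∑ i ∈ range (k * n + n), b ^ 2 ^ i
      = ∑ i ∈ range (k * n), b ^ 2 ^ i + ∑ i ∈ range n, b ^ 2 ^ i := by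
    intro k
    rw [Finset.sum_range_add]
    congr 1
    refine Finset.sum_congr rfl fun i _ => ?_
    rw [pow_add, pow_mul, pow_pow_self hb k]
  rw [show 4 * n = 3 * n + n by ring, hblock 3, show 3 * n = 2 * n + n by ring, hblock 2,
    show 2 * n = 1 * n + n by ring, hblock 1, show 1 * n = 0 * n + n by ring, hblock 0]
  simp [CharTwo.add_self_eq_zero]

lemma mu_trace {x : K} (hx0 : x ≠ 0) (hx1 : x ≠ 1) :
    (x⁻¹ + 1)⁻¹ + (x + 1)⁻¹ = 1 := by
  have h1 : x + 1 ≠ 0 := add_one_ne hx1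
  have h4 : (x⁻¹ + 1)⁻¹ = x * (x + 1)⁻¹ := by
    apply inv_eq_of_mul_eq_one_right
    field_simp
    ring
  rw [h4]
  field_simp

lemma root [Fintype K] {n : ℕ} (hn : 0 < n) (hcard : Fintype.card K = 2 ^ (4 * n))
    {a : K} (ha0 : a ≠ 0) (haq : a ^ 2 ^ n = a) :
    ∃ x : K, x ≠ 0 ∧ x ≠ 1 ∧ x + x⁻¹ = a ∧ (x ^ 2 ^ n = x ∨ x ^ 2 ^ n = x⁻¹) := by
  have hainv : (a⁻¹) ^ 2 ^ n = a⁻¹ := by rw [inv_pow, haq]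
  have hbq : (a⁻¹ ^ 2) ^ 2 ^ n = a⁻¹ ^ 2 := by
    rw [← pow_mul, mul_comm, pow_mul, hainv]
  obtain ⟨y, hy⟩ := solv (N := 4 * n) (by omega) hcard _ (sum_four hbq)
  set x := a * y with hxdef
  have hxx : x * (x + a) = 1 := by
    have h5 : a ^ 2 * (y ^ 2 + y) = 1 := by
      rw [hy, ← mul_pow, mul_inv_cancel₀ ha0, one_pow]
    rw [hxdef]
    linear_combination h5
  have hx0 : x ≠ 0 := by
    intro h; rw [h, zero_mul] at hxx; exact zero_ne_one hxx
  have hxinv : x⁻¹ = x + a := inv_eq_of_mul_eq_one_right hxx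
  have hxa : x + x⁻¹ = a := by rw [hxinv]; linear_combination x * (two0 (K := K))
  have hx1 : x ≠ 1 := by
    intro h
    rw [h, one_mul] at hxx
    apply ha0
    linear_combination hxx
  have hfr : (x ^ 2 ^ n) * (x ^ 2 ^ n + a) = 1 := by
    have h1 : (x * (x + a)) ^ 2 ^ n = 1 := by rw [hxx, one_pow]
    rw [mul_pow, add_pow_char_pow, haq] at h1
    exact h1
  have hsplit : (x ^ 2 ^ n + x) * ((x ^ 2 ^ n + x) + a) = 0 := by
    linear_combination hfr + hxx + (x * x ^ 2 ^ n + 1) * (two0 (K := K))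
  refine ⟨x, hx0, hx1, hxa, ?_⟩
  rcases mul_eq_zero.mp hsplit with hc | hc
  · left; linear_combination hc - x * (two0 (K := K))
  · right; rw [hxinv]; linear_combination hc - (x + a) * (two0 (K := K))

end Stmt6Aux

open Stmt6Aux in
/-- With `Φ(x) = x + x⁻¹` on `𝔽_{q⁴}ˣ`:
`Φ(μ_{q+1}\{1}) = {a ∈ 𝔽_qˣ : Tr_2^q(1/a) = 1}` and
`Φ(𝔽_qˣ\{1}) = {a ∈ 𝔽_qˣ : Tr_2^q(1/a) = 0}`. -/
theorem stmt6 (n : ℕ) (hn : 0 < n) (q : ℕ) (hq : q = 2 ^ n)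
    (K : Type*) [Field K] [Fintype K] (hK : Fintype.card K = q ^ 4) :
    {a : K | ∃ x : K, x ^ (q + 1) = 1 ∧ x ≠ 1 ∧ x + x⁻¹ = a} =
      {a : K | a ≠ 0 ∧ a ^ q = a ∧ (∑ i ∈ Finset.range n, a⁻¹ ^ 2 ^ i) = 1} ∧
    {a : K | ∃ x : K, x ^ q = x ∧ x ≠ 0 ∧ x ≠ 1 ∧ x + x⁻¹ = a} =
      {a : K | a ≠ 0 ∧ a ^ q = a ∧ (∑ i ∈ Finset.range n, a⁻¹ ^ 2 ^ i) = 0} := by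
  subst hq
  have hcard : Fintype.card K = 2 ^ (4 * n) := by
    rw [hK, ← pow_mul]
    congr 1
    ring
  haveI hchar : CharP K 2 := by
    have h1 : ringChar K ∣ 2 ^ (4 * n) := by
      rw [← hcard]
      exact (CharP.cast_eq_zero_iff K (ringChar K) _).mp (Nat.cast_card_eq_zero K)
    have hp : (ringChar K).Prime := CharP.char_is_prime K (ringChar K)
    have h2 : ringChar K = 2 :=
      (Nat.prime_dvd_prime_iff_eq hp Nat.prime_two).mp (hp.dvd_of_dvd_pow h1)
    rw [← h2]
    exact ringChar.charP K
  -- forward computation for μ_{q+1} \ {1}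
  have fwd_mu : ∀ x : K, x ^ (2 ^ n + 1) = 1 → x ≠ 1 →
      (x + x⁻¹) ≠ 0 ∧ (x + x⁻¹) ^ 2 ^ n = x + x⁻¹ ∧
      (∑ i ∈ Finset.range n, ((x + x⁻¹)⁻¹) ^ 2 ^ i) = 1 := by
    intro x hx hx1
    have hx0 : x ≠ 0 := by
      intro h
      rw [h, zero_pow (by positivity)] at hx
      exact zero_ne_one hx
    have hxq : x ^ 2 ^ n = x⁻¹ := by
      rw [pow_succ] at hx
      exact eq_inv_of_mul_eq_one_left hx
    have h5 : (x⁻¹) ^ 2 ^ n = x := by rw [inv_pow, hxq, inv_inv]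
    refine ⟨a_ne hx0 hx1, ?_, ?_⟩
    · rw [add_pow_char_pow, hxq, h5, add_comm]
    · rw [trace_eq n hx0 hx1, hxq]
      exact mu_trace hx0 hx1
  -- forward computation for 𝔽_q^* \ {1}
  have fwd_fq : ∀ x : K, x ^ 2 ^ n = x → x ≠ 0 → x ≠ 1 →
      (x + x⁻¹) ≠ 0 ∧ (x + x⁻¹) ^ 2 ^ n = x + x⁻¹ ∧
      (∑ i ∈ Finset.range n, ((x + x⁻¹)⁻¹) ^ 2 ^ i) = 0 := by
    intro x hxq hx0 hx1
    have h5 : (x⁻¹) ^ 2 ^ n = x⁻¹ := by rw [inv_pow, hxq]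
    refine ⟨a_ne hx0 hx1, ?_, ?_⟩
    · rw [add_pow_char_pow, hxq, h5]
    · rw [trace_eq n hx0 hx1, hxq]
      exact CharTwo.add_self_eq_zero _
  constructor
  · ext a
    simp only [Set.mem_setOf_eq]
    constructor
    · rintro ⟨x, hx, hx1, rfl⟩
      exact fwd_mu x hx hx1
    · rintro ⟨ha0, haq, hT⟩
      obtain ⟨x, hx0, hx1, hxa, hcase⟩ := root hn hcard ha0 haq
      rcases hcase with hc | hc
      · have h0 := (fwd_fq x hc hx0 hx1).2.2
        rw [hxa] at h0
        exact absurd (h0.symm.trans hT) zero_ne_one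
      · refine ⟨x, ?_, hx1, hxa⟩
        rw [pow_succ, hc, inv_mul_cancel₀ hx0]
  · ext a
    simp only [Set.mem_setOf_eq]
    constructor
    · rintro ⟨x, hxq, hx0, hx1, rfl⟩
      exact fwd_fq x hxq hx0 hx1
    · rintro ⟨ha0, haq, hT⟩
      obtain ⟨x, hx0, hx1, hxa, hcase⟩ := root hn hcard ha0 haq
      rcases hcase with hc | hc
      · exact ⟨x, hc, hx0, hx1, hxa⟩
      · have hmu : x ^ (2 ^ n + 1) = 1 := by
          rw [pow_succ, hc, inv_mul_cancel₀ hx0]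
        have h1 := (fwd_mu x hmu hx1).2.2
        rw [hxa] at h1
        exact absurd (h1.symm.trans hT) one_ne_zero
end

section
/- Let $n$ be a positive integer and $q = 2^n$. Define $\Phi(x) = x + x^{-1}$. Then $\Phi(\mu_{q^2+1} \setminus \{1\}) = \{a \in \mathbb{F}_{q^2}^* : \mathrm{Tr}_2^{q^2}(1/a) = 1\}$ and $\Phi(\mathbb{F}_{q^2}^* \setminus \{1\}) = \{a \in \mathbb{F}_{q^2}^* : \mathrm{Tr}_2^{q^2}(1/a) = 0\}$. -/
section Aux
variable {K : Type*} [Field K] [CharP K 2]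

lemma auxTel7 (z : K) (m : ℕ) :
    ∑ i ∈ Finset.range m, (z ^ 2 + z) ^ 2 ^ i = z ^ 2 ^ m + z := by
  induction m with
  | zero => simp [CharTwo.add_self_eq_zero]
  | succ m ih =>
    have e1 : (z ^ 2 + z) ^ 2 ^ m = (z ^ 2 ^ m) ^ 2 + z ^ 2 ^ m := by
      rw [add_pow_char_pow, ← pow_mul, ← pow_mul, mul_comm]
    have e2 : z ^ 2 ^ (m + 1) = (z ^ 2 ^ m) ^ 2 := by rw [← pow_mul, pow_succ]
    rw [Finset.sum_range_succ, ih, e1, e2]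
    linear_combination (CharTwo.add_self_eq_zero (z ^ 2 ^ m) : z ^ 2 ^ m + z ^ 2 ^ m = 0)
lemma auxExists7 {K : Type*} [Field K] [Fintype K] [CharP K 2] (m : ℕ) (hm : 0 < m)
    (hcard : Fintype.card K = 2 ^ m) (c : K)
    (hc : ∑ i ∈ Finset.range m, c ^ 2 ^ i = 0) : ∃ z : K, z ^ 2 + z = c := by
  classical
  set T : K → K := fun a => ∑ i ∈ Finset.range m, a ^ 2 ^ i with hT
  have hpow : ∀ a : K, a ^ 2 ^ m = a := fun a => by
    rw [← hcard]; exact FiniteField.pow_card a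
  have hTsq : ∀ a : K, T a ^ 2 = T a := by
    intro a
    have h1 : T a ^ 2 = ∑ i ∈ Finset.range m, a ^ 2 ^ (i + 1) := by
      rw [hT]
      rw [sum_pow_char]
      exact Finset.sum_congr rfl fun i _ => by rw [← pow_mul, ← pow_succ]
    have h2 : (∑ i ∈ Finset.range m, a ^ 2 ^ (i + 1)) + a ^ 2 ^ 0 = T a + a ^ 2 ^ m := by
      rw [hT, ← Finset.sum_range_succ' (fun i => a ^ 2 ^ i) m, Finset.sum_range_succ]
    rw [hpow a, pow_zero, pow_one] at h2
    rw [h1]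
    exact add_right_cancel h2
  have hT01 : ∀ a : K, T a = 0 ∨ T a = 1 := by
    intro a
    have h : T a * (T a - 1) = 0 := by linear_combination hTsq a
    rcases mul_eq_zero.mp h with h | h
    · exact Or.inl h
    · exact Or.inr (by linear_combination h)
  have hTadd : ∀ a b : K, T (a + b) = T a + T b := by
    intro a b
    rw [hT]
    simp only
    rw [← Finset.sum_add_distrib]
    exact Finset.sum_congr rfl fun i _ => add_pow_char_pow a b 2 i
  -- there is an element of trace 1
  obtain ⟨c₀, hc₀⟩ : ∃ c₀ : K, T c₀ = 1 := by
    set P : Polynomial K := ∑ i ∈ Finset.range m, Polynomial.X ^ 2 ^ i with hP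
    have hPeval : ∀ a : K, P.eval a = T a := by
      intro a; rw [hP, hT]; simp [Polynomial.eval_finset_sum]
    have hPne : P ≠ 0 := by
      intro h0
      have h1 : P.coeff 1 = 1 := by
        rw [hP, Polynomial.finset_sum_coeff]
        rw [Finset.sum_eq_single 0]
        · simp
        · intro i _ hi
          rw [Polynomial.coeff_X_pow]
          have : (2:ℕ) ^ i ≠ 1 := Nat.ne_of_gt (Nat.one_lt_two_pow_iff.mpr hi)
          simp [this.symm]
        · intro h; exact absurd (Finset.mem_range.mpr hm) h
      rw [h0] at h1
      simp at h1
    have hdeg : P.natDegree < Fintype.card K := by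
      have : P.natDegree ≤ 2 ^ (m - 1) := by
        rw [hP]
        apply Polynomial.natDegree_sum_le_of_forall_le
        intro i hi
        rw [Finset.mem_range] at hi
        rw [Polynomial.natDegree_X_pow]
        exact Nat.pow_le_pow_right (by norm_num) (by omega : i ≤ m - 1)
      rw [hcard]
      calc P.natDegree ≤ 2 ^ (m - 1) := this
        _ < 2 ^ m := Nat.pow_lt_pow_right (by norm_num) (by omega)
    obtain ⟨r, hr⟩ := P.exists_eval_ne_zero_of_natDegree_lt_card hPne
      (by rw [Cardinal.mk_fintype]; exact_mod_cast hdeg)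
    rw [hPeval] at hr
    exact ⟨r, (hT01 r).resolve_left hr⟩
  -- counting
  set f : K → K := fun z => z ^ 2 + z with hf
  set S : Finset K := Finset.univ.image f with hS
  set T0 : Finset K := Finset.univ.filter (fun a => T a = 0) with hT0
  have hSsub : S ⊆ T0 := by
    intro b hb
    obtain ⟨z, _, rfl⟩ := Finset.mem_image.mp hb
    rw [hT0, Finset.mem_filter]
    refine ⟨Finset.mem_univ _, ?_⟩
    show T (z ^ 2 + z) = 0
    rw [hT]
    simp only
    rw [auxTel7, hpow]
    exact CharTwo.add_self_eq_zero z
  have hcard_le : Fintype.card K ≤ 2 * S.card := by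
    rw [← Finset.card_univ]
    apply Finset.card_le_mul_card_image
    intro b hb
    obtain ⟨w, _, hw⟩ := Finset.mem_image.mp hb
    have hsub : Finset.univ.filter (fun z => f z = b) ⊆ {w, w + 1} := by
      intro z hz
      rw [Finset.mem_filter] at hz
      have hzw : z ^ 2 + z = w ^ 2 + w := hz.2.trans hw.symm
      have h0 : (z + w) * (z + w + 1) = 0 := by
        linear_combination hzw + (z * w + w ^ 2 + w) * (CharTwo.two_eq_zero (R := K))
      rcases mul_eq_zero.mp h0 with h | h
      · have : z = w := by linear_combination h - w * (CharTwo.two_eq_zero (R := K))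
        simp [this]
      · have : z = w + 1 := by linear_combination h - (w + 1) * (CharTwo.two_eq_zero (R := K))
        simp [this]
    calc (Finset.univ.filter (fun z => f z = b)).card ≤ ({w, w + 1} : Finset K).card :=
          Finset.card_le_card hsub
      _ ≤ 2 := Finset.card_insert_le _ _ |>.trans (by simp)
  have hT0card : 2 * T0.card = Fintype.card K := by
    have hsplit := Finset.card_filter_add_card_filter_not
      (s := (Finset.univ : Finset K)) (p := fun a => T a = 0)
    rw [Finset.card_univ] at hsplit
    have hbij : T0.card = (Finset.univ.filter (fun a => ¬ T a = 0)).card := by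
      apply Finset.card_bij (fun a _ => a + c₀)
      · intro a ha
        rw [hT0, Finset.mem_filter] at ha
        rw [Finset.mem_filter]
        refine ⟨Finset.mem_univ _, ?_⟩
        rw [hTadd, ha.2, hc₀, zero_add]
        exact one_ne_zero
      · intro a ha b hb hab
        exact add_right_cancel hab
      · intro d hd
        rw [Finset.mem_filter] at hd
        refine ⟨d + c₀, ?_, ?_⟩
        · rw [hT0, Finset.mem_filter]
          refine ⟨Finset.mem_univ _, ?_⟩
          rw [hTadd, (hT01 d).resolve_left hd.2, hc₀]
          exact CharTwo.add_self_eq_zero 1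
        · rw [add_assoc, CharTwo.add_self_eq_zero, add_zero]
    simp only [hT0] at hbij ⊢
    omega
  have hST : T0 = S := by
    refine (Finset.eq_of_subset_of_card_le hSsub ?_).symm
    omega
  have hcS : c ∈ S := by
    rw [← hST, hT0, Finset.mem_filter]
    exact ⟨Finset.mem_univ _, hc⟩
  obtain ⟨z, _, hz⟩ := Finset.mem_image.mp hcS
  exact ⟨z, hz⟩

end Aux

/-- With `Φ(x) = x + x⁻¹` on `𝔽_{q⁴}ˣ`:
`Φ(μ_{q²+1}\{1}) = {a ∈ 𝔽_{q²}ˣ : Tr_2^{q²}(1/a) = 1}` and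
`Φ(𝔽_{q²}ˣ\{1}) = {a ∈ 𝔽_{q²}ˣ : Tr_2^{q²}(1/a) = 0}`. -/
theorem stmt7 (n : ℕ) (hn : 0 < n) (q : ℕ) (hq : q = 2 ^ n)
    (K : Type*) [Field K] [Fintype K] (hK : Fintype.card K = q ^ 4) :
    {a : K | ∃ x : K, x ^ (q ^ 2 + 1) = 1 ∧ x ≠ 1 ∧ x + x⁻¹ = a} =
      {a : K | a ≠ 0 ∧ a ^ q ^ 2 = a ∧
        (∑ i ∈ Finset.range (2 * n), a⁻¹ ^ 2 ^ i) = 1} ∧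
    {a : K | ∃ x : K, x ^ q ^ 2 = x ∧ x ≠ 0 ∧ x ≠ 1 ∧ x + x⁻¹ = a} =
      {a : K | a ≠ 0 ∧ a ^ q ^ 2 = a ∧
        (∑ i ∈ Finset.range (2 * n), a⁻¹ ^ 2 ^ i) = 0} := by
  subst hq
  have hcard2 : Fintype.card K = 2 ^ (4 * n) := by
    rw [hK, ← pow_mul]; ring_nf
  have hp : (ringChar K).Prime := CharP.char_is_prime K (ringChar K)
  obtain ⟨k, _, hk⟩ := FiniteField.card K (ringChar K)
  have h2 : ringChar K = 2 := by
    have hdvd : ringChar K ∣ 2 ^ (4 * n) := by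
      rw [← hcard2, hk]
      exact dvd_pow_self _ (by positivity)
    exact (Nat.prime_dvd_prime_iff_eq hp Nat.prime_two).mp (hp.dvd_of_dvd_pow hdvd)
  haveI : CharP K 2 := h2 ▸ ringChar.charP K
  have h2K : (2 : K) = 0 := CharTwo.two_eq_zero
  have hqq : ((2:ℕ) ^ n) ^ 2 = 2 ^ (2 * n) := by rw [← pow_mul]; ring_nf
  simp only [hqq]
  set F : ℕ := 2 ^ (2 * n) with hF
  -- frobenius facts
  have hfa : ∀ x y : K, (x + y) ^ F = x ^ F + y ^ F := fun x y => add_pow_char_pow x y 2 (2 * n)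
  have hdouble : ∀ c : K, c ^ F = c → ∑ i ∈ Finset.range (4 * n), c ^ 2 ^ i = 0 := by
    intro c hc
    have h44 : 4 * n = 2 * n + 2 * n := by ring
    rw [h44, Finset.sum_range_add]
    have he : ∀ i : ℕ, c ^ 2 ^ (2 * n + i) = c ^ 2 ^ i := by
      intro i
      rw [pow_add, pow_mul, hc]
    rw [Finset.sum_congr rfl fun i _ => he i]
    exact CharTwo.add_self_eq_zero _
  have hne1 : ∀ x : K, x ≠ 1 → x + 1 ≠ 0 := by
    intro x hx h
    exact hx (by linear_combination h - h2K)
  have ha_ne : ∀ x : K, x ≠ 0 → x ≠ 1 → x + x⁻¹ ≠ 0 := by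
    intro x hx0 hx1 h
    have h' : x * (x + x⁻¹) = 0 := by rw [h, mul_zero]
    rw [mul_add, mul_inv_cancel₀ hx0] at h'
    have hsq : (x + 1) ^ 2 = 0 := by linear_combination h' + x * h2K
    exact hne1 x hx1 (pow_eq_zero_iff (by norm_num) |>.mp hsq)
  -- the Artin-Schreier element for the trace computation
  have hw_eq : ∀ x : K, x ≠ 0 → x ≠ 1 → ((x + 1)⁻¹) ^ 2 + (x + 1)⁻¹ = (x + x⁻¹)⁻¹ := by
    intro x hx0 hx1
    have hx1' := hne1 x hx1
    have ha := ha_ne x hx0 hx1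
    apply eq_inv_of_mul_eq_one_left
    field_simp
    linear_combination h2K
  have hTtel : ∀ z : K, ∑ i ∈ Finset.range (2 * n), (z ^ 2 + z) ^ 2 ^ i = z ^ F + z :=
    fun z => auxTel7 z (2 * n)
  constructor
  · ext a
    simp only [Set.mem_setOf_eq]
    constructor
    · rintro ⟨x, hx, hx1, rfl⟩
      have hx0 : x ≠ 0 := by
        rintro rfl
        rw [zero_pow (by positivity)] at hx
        exact zero_ne_one hx
      have hxF : x ^ F = x⁻¹ := by
        have h' : x * x ^ F = 1 := by rw [mul_comm, ← pow_succ]; exact hx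
        exact eq_inv_of_mul_eq_one_left (by rw [mul_comm]; exact h')
      refine ⟨ha_ne x hx0 hx1, ?_, ?_⟩
      · rw [hfa, hxF, inv_pow, hxF, inv_inv, add_comm]
      · rw [← hw_eq x hx0 hx1, hTtel, inv_pow, hfa, hxF, one_pow]
        have hxi1 : x⁻¹ + 1 ≠ 0 := hne1 _ (by
          intro h; exact hx1 (inv_eq_one.mp h))
        have hx1' : x + 1 ≠ 0 := hne1 x hx1
        have e : x⁻¹ + 1 = x⁻¹ * (x + 1) := by
          rw [mul_add, inv_mul_cancel₀ hx0, mul_one, add_comm]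
        rw [e, mul_inv, inv_inv, ← add_one_mul, mul_inv_cancel₀ hx1']
    · rintro ⟨ha0, haF, hTa⟩
      have hainv : a⁻¹ ^ F = a⁻¹ := by rw [inv_pow, haF]
      obtain ⟨z, hz⟩ := auxExists7 (4 * n) (by omega) hcard2 a⁻¹ (hdouble a⁻¹ hainv)
      have hz0 : z ≠ 0 := by
        rintro rfl
        have : a⁻¹ = 0 := by rw [← hz]; ring
        exact ha0 (inv_eq_zero.mp this)
      have hz1 : z ≠ 1 := by
        rintro rfl
        have : a⁻¹ = 0 := by linear_combination - hz + h2K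
        exact ha0 (inv_eq_zero.mp this)
      have hz1' : z + 1 ≠ 0 := hne1 z hz1
      have hzF : z ^ F = z + 1 := by
        have h1 := hTtel z
        rw [hz, hTa] at h1
        linear_combination - h1 - z * h2K
      have hx0 : z⁻¹ + 1 ≠ 0 := by
        intro h
        exact hz1 (inv_eq_one.mp (by linear_combination h - h2K))
      have hzi0 : z⁻¹ ≠ 0 := inv_ne_zero hz0
      refine ⟨z⁻¹ + 1, ?_, ?_, ?_⟩
      · rw [pow_succ, hfa, inv_pow, hzF, one_pow]
        have hz1'' : 1 + z ≠ 0 := by rw [add_comm]; exact hz1'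
        field_simp
        linear_combination (1 + z) * h2K
      · intro h
        have : z⁻¹ = 0 := by linear_combination h
        exact hzi0 this
      · have ha' : a = (z ^ 2 + z)⁻¹ := by rw [hz, inv_inv]
        rw [ha']
        apply eq_inv_of_mul_eq_one_left
        have hz1'' : 1 + z ≠ 0 := by rw [add_comm]; exact hz1'
        have hzz : z ^ 2 + z ≠ 0 := by rw [hz]; exact inv_ne_zero ha0
        field_simp
        linear_combination (z + 2 * z ^ 2 + z ^ 3) * h2K
  · ext a
    simp only [Set.mem_setOf_eq]
    constructor
    · rintro ⟨x, hxF, hx0, hx1, rfl⟩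
      refine ⟨ha_ne x hx0 hx1, ?_, ?_⟩
      · rw [hfa, hxF, inv_pow, hxF]
      · rw [← hw_eq x hx0 hx1, hTtel, inv_pow, hfa, hxF, one_pow]
        exact CharTwo.add_self_eq_zero _
    · rintro ⟨ha0, haF, hTa⟩
      have hainv : a⁻¹ ^ F = a⁻¹ := by rw [inv_pow, haF]
      obtain ⟨z, hz⟩ := auxExists7 (4 * n) (by omega) hcard2 a⁻¹ (hdouble a⁻¹ hainv)
      have hz0 : z ≠ 0 := by
        rintro rfl
        have : a⁻¹ = 0 := by rw [← hz]; ring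
        exact ha0 (inv_eq_zero.mp this)
      have hz1 : z ≠ 1 := by
        rintro rfl
        have : a⁻¹ = 0 := by linear_combination - hz + h2K
        exact ha0 (inv_eq_zero.mp this)
      have hz1' : z + 1 ≠ 0 := hne1 z hz1
      have hzF : z ^ F = z := by
        have h1 := hTtel z
        rw [hz, hTa] at h1
        linear_combination - h1 - z * h2K
      have hx0 : z⁻¹ + 1 ≠ 0 := by
        intro h
        exact hz1 (inv_eq_one.mp (by linear_combination h - h2K))
      have hzi0 : z⁻¹ ≠ 0 := inv_ne_zero hz0
      refine ⟨z⁻¹ + 1, ?_, ?_, ?_, ?_⟩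
      · rw [hfa, inv_pow, hzF, one_pow]
      · exact hx0
      · intro h
        have : z⁻¹ = 0 := by linear_combination h
        exact hzi0 this
      · have ha' : a = (z ^ 2 + z)⁻¹ := by rw [hz, inv_inv]
        rw [ha']
        apply eq_inv_of_mul_eq_one_left
        have hz1'' : 1 + z ≠ 0 := by rw [add_comm]; exact hz1'
        have hzz : z ^ 2 + z ≠ 0 := by rw [hz]; exact inv_ne_zero ha0
        field_simp
        linear_combination (z + 2 * z ^ 2 + z ^ 3) * h2K
end

section
/- Let $n$ be a positive integer and $q = 2^n$. Define $\Lambda = \{c \in \mathbb{F}_{q^4}^* : \mathfrak{t}' \neq 0 \text{ and } \mathrm{Tr}_2^q(\mathfrak{n}'^{(q+1)/2}/\mathfrak{t}') = 1\}$, where $\mathfrak{t} = c + c^{q^2}$, $\mathfrak{n} = c^{q^2+1}$, $\mathfrak{t}' = \mathfrak{t} + \mathfrak{t}^q$, and $\mathfrak{n}' = \mathfrak{n} + 1$. Then $|\Lambda| = \frac{1}{2} q^3 (q-1)$. -/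
set_option linter.unusedSectionVars false
open Finset

section Infra
variable {K : Type*} [Field K] [CharP K 2]

private def trp (m : ℕ) (y : K) : K := ∑ i ∈ Finset.range m, y ^ 2 ^ i

private lemma pp (x : K) (a b : ℕ) : (x ^ 2 ^ a) ^ 2 ^ b = x ^ 2 ^ (a + b) := by
  rw [← pow_mul, ← pow_add]

private lemma frob_add (x y : K) (k : ℕ) : (x + y) ^ 2 ^ k = x ^ 2 ^ k + y ^ 2 ^ k :=
  add_pow_char_pow x y 2 k

private lemma sq_pow (y : K) (i : ℕ) : (y ^ 2) ^ 2 ^ i = y ^ 2 ^ (i + 1) := by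
  rw [← pow_mul, ← pow_succ']

private lemma trp_add (m : ℕ) (x y : K) : trp m (x + y) = trp m x + trp m y := by
  simp only [trp, frob_add, Finset.sum_add_distrib]

private lemma trp_sq (m : ℕ) (y : K) : trp m (y ^ 2) = trp m y + (y ^ 2 ^ m + y) := by
  have h1 : trp m (y ^ 2) = ∑ i ∈ range m, y ^ 2 ^ (i + 1) :=
    Finset.sum_congr rfl fun i _ => sq_pow y i
  have h2 : ∑ i ∈ range m, y ^ 2 ^ (i + 1) + y ^ 2 ^ 0 =
      ∑ k ∈ range m, y ^ 2 ^ k + y ^ 2 ^ m := by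
    rw [← Finset.sum_range_succ' (fun k => y ^ 2 ^ k) m, Finset.sum_range_succ]
  have h3 : (y : K) + y = 0 := CharTwo.add_self_eq_zero y
  rw [h1]
  have h0 : y ^ 2 ^ 0 = y := by norm_num
  rw [h0] at h2
  show _ = trp m y + (y ^ 2 ^ m + y)
  unfold trp
  linear_combination h2 - h3

private lemma trp_telescope (m : ℕ) (z : K) : trp m (z ^ 2 + z) = z ^ 2 ^ m + z := by
  have h := Finset.sum_range_sub (fun j => z ^ 2 ^ j) m
  simp only [CharTwo.sub_eq_add] at h
  have h1 : trp m (z ^ 2 + z) = ∑ i ∈ range m, (z ^ 2 ^ (i + 1) + z ^ 2 ^ i) := by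
    unfold trp
    refine Finset.sum_congr rfl fun i _ => ?_
    rw [frob_add, sq_pow]
  rw [h1, h]
  norm_num

private lemma trp_split (a b : ℕ) (y : K) : trp (a + b) y = trp a y + trp b (y ^ 2 ^ a) := by
  unfold trp
  rw [Finset.sum_range_add]
  refine congrArg _ (Finset.sum_congr rfl fun i _ => ?_)
  rw [pp]

private lemma trp_two (a : ℕ) (y : K) (hy : y ^ 2 ^ a = y) : trp (a + a) y = 0 := by
  rw [trp_split, hy, CharTwo.add_self_eq_zero]

private lemma trp_zero_or_one (m : ℕ) (y : K) (hy : y ^ 2 ^ m = y) :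
    trp m y = 0 ∨ trp m y = 1 := by
  have h1 : (trp m y) ^ 2 = trp m (y ^ 2) := by
    unfold trp
    rw [sum_pow_char]
    exact Finset.sum_congr rfl fun i _ => by rw [← pow_mul, ← pow_mul, mul_comm]
  have hsq : (trp m y) ^ 2 = trp m y := by
    rw [h1, trp_sq, hy, CharTwo.add_self_eq_zero, add_zero]
  have h2 : trp m y * (trp m y - 1) = 0 := by linear_combination hsq
  rcases mul_eq_zero.mp h2 with h | h
  · exact Or.inl h
  · exact Or.inr (sub_eq_zero.mp h)

private lemma ncard_roots_le (p : Polynomial K) (hp : p ≠ 0) :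
    {x : K | Polynomial.eval x p = 0}.ncard ≤ p.natDegree := by
  classical
  have hsub : {x : K | Polynomial.eval x p = 0} ⊆ ↑p.roots.toFinset := by
    intro x hx
    simp only [Set.mem_setOf_eq] at hx
    simp only [Finset.coe_sort_coe, Finset.mem_coe, Multiset.mem_toFinset,
      Polynomial.mem_roots hp, Polynomial.IsRoot]
    exact hx
  calc {x : K | Polynomial.eval x p = 0}.ncard
      ≤ (↑p.roots.toFinset : Set K).ncard := Set.ncard_le_ncard hsub (Set.toFinite _)
    _ = p.roots.toFinset.card := Set.ncard_coe_finset _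
    _ ≤ Multiset.card p.roots := Multiset.toFinset_card_le _
    _ ≤ p.natDegree := Polynomial.card_roots' p

private lemma card_ker_range (f : K →+ K) :
    Nat.card K = Nat.card f.range * Nat.card f.ker := by
  rw [AddSubgroup.card_eq_card_quotient_mul_card_addSubgroup f.ker]
  congr 1
  exact Nat.card_congr (QuotientAddGroup.quotientKerEquivRange f).toEquiv

end Infra

section Counting
variable {K : Type*} [Field K] [Fintype K] [CharP K 2]

private lemma artin (M : ℕ) (hM : 0 < M) (hK : Fintype.card K = 2 ^ M) (v : K)
    (hv : trp M v = 0) : ∃ x : K, x ^ 2 + x = v := by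
  classical
  set P : K →+ K :=
    { toFun := fun x => x ^ 2 + x
      map_zero' := by norm_num
      map_add' := by
        intro a b
        show (a + b) ^ 2 + (a + b) = (a ^ 2 + a) + (b ^ 2 + b)
        rw [CharTwo.add_sq]; ring } with hP
  have hPS : ∀ x : K, trp M (P x) = 0 := by
    intro x
    show trp M (x ^ 2 + x) = 0
    rw [trp_telescope]
    have hx : x ^ 2 ^ M = x := by rw [← hK]; exact FiniteField.pow_card x
    rw [hx, CharTwo.add_self_eq_zero]
  set p4 : Polynomial K := ∑ j ∈ range M, Polynomial.X ^ (2 ^ j) with hp4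
  have hev : ∀ x : K, Polynomial.eval x p4 = trp M x := by
    intro x
    rw [hp4, Polynomial.eval_finset_sum]
    exact Finset.sum_congr rfl fun i _ => by
      rw [Polynomial.eval_pow, Polynomial.eval_X]
  have hp40 : p4 ≠ 0 := by
    intro h
    have hc : p4.coeff 1 = 1 := by
      rw [hp4, Polynomial.finset_sum_coeff]
      rw [Finset.sum_eq_single 0]
      · simp
      · intro j hj hj0
        rw [Polynomial.coeff_X_pow]
        have : (1 : ℕ) < 2 ^ j := Nat.one_lt_two_pow hj0
        simp [Nat.ne_of_lt this]
      · intro h0; exact absurd (Finset.mem_range.mpr hM) h0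
    rw [h] at hc
    simp at hc
  have hdeg : p4.natDegree ≤ 2 ^ (M - 1) := by
    refine Polynomial.natDegree_sum_le_of_forall_le _ _ fun j hj => ?_
    rw [Polynomial.natDegree_X_pow]
    have hjM := Finset.mem_range.mp hj
    exact Nat.pow_le_pow_right (by norm_num) (by omega)
  have hS : {y : K | trp M y = 0}.ncard ≤ 2 ^ (M - 1) := by
    have := ncard_roots_le p4 hp40
    simp only [hev] at this
    exact this.trans hdeg
  have hker : (P.ker : Set K) = {0, 1} := by
    ext x
    simp only [SetLike.mem_coe, AddMonoidHom.mem_ker, Set.mem_insert_iff,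
      Set.mem_singleton_iff]
    show x ^ 2 + x = 0 ↔ _
    constructor
    · intro h
      have : x * (x + 1) = 0 := by linear_combination h
      rcases mul_eq_zero.mp this with h' | h'
      · exact Or.inl h'
      · refine Or.inr ?_
        have := CharTwo.neg_eq (R := K) 1
        linear_combination h' + this
    · rintro (rfl | rfl) <;> [norm_num; (show (1:K)^2 + 1 = 0; rw [one_pow]; exact CharTwo.add_self_eq_zero 1)]
  have hkercard : Nat.card P.ker = 2 := by
    have : Nat.card P.ker = ((P.ker : Set K)).ncard := (Nat.card_coe_set_eq _).symm ▸ rfl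
    rw [show (Nat.card ↥P.ker) = ((P.ker : Set K)).ncard from (Nat.card_coe_set_eq _).symm,
      hker, Set.ncard_pair (zero_ne_one)]
  have hiso := card_ker_range P
  have hcardK : Nat.card K = 2 ^ M := by rw [Nat.card_eq_fintype_card, hK]
  have hrange : Nat.card P.range = 2 ^ (M - 1) := by
    rw [hcardK, hkercard] at hiso
    have h2M : 2 ^ M = 2 ^ (M - 1) * 2 := by
      rw [← pow_succ]; congr 1; omega
    omega
  have hsub2 : (P.range : Set K) ⊆ {y : K | trp M y = 0} := by
    rintro y ⟨x, rfl⟩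
    exact hPS x
  have hle : {y : K | trp M y = 0}.ncard ≤ ((P.range : Set K)).ncard := by
    rw [show ((P.range : Set K)).ncard = Nat.card ↥P.range from Nat.card_coe_set_eq _ ▸ rfl,
      hrange]
    exact hS
  have heq : (P.range : Set K) = {y : K | trp M y = 0} :=
    Set.eq_of_subset_of_ncard_le hsub2 hle (Set.toFinite _)
  have hvmem : v ∈ (P.range : Set K) := by rw [heq]; exact hv
  obtain ⟨x, hx⟩ := hvmem
  exact ⟨x, hx⟩

end Counting

section Tau
variable {K : Type*} [Field K] [Fintype K] [CharP K 2]

private lemma ncard_coe_addsubgroup (H : AddSubgroup K) :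
    ((H : Set K)).ncard = Nat.card H :=
  (Nat.card_coe_set_eq _).symm

private lemma ppq (q : ℕ) (x : K) (a b : ℕ) : (x ^ q ^ a) ^ q ^ b = x ^ q ^ (a + b) := by
  rw [← pow_mul, ← pow_add]

private lemma frob_addq {n : ℕ} {q : ℕ} (hq : q = 2 ^ n) (x y : K) (k : ℕ) :
    (x + y) ^ q ^ k = x ^ q ^ k + y ^ q ^ k := by
  subst hq
  rw [← Nat.pow_mul]
  exact frob_add x y (n * k)

private lemma card_tau (n q : ℕ) (hn : 0 < n) (hq : q = 2 ^ n)
    (hK : Fintype.card K = q ^ 4) :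
    {c : K | c + c ^ q + c ^ q ^ 2 + c ^ q ^ 3 = 0}.ncard = q ^ 3 := by
  classical
  have hq2 : 2 ≤ q := by subst hq; exact Nat.one_lt_two_pow (by omega)
  have hfrob : ∀ (x y : K) (k : ℕ), (x + y) ^ q ^ k = x ^ q ^ k + y ^ q ^ k :=
    fun x y k => frob_addq hq x y k
  have hc4 : ∀ c : K, c ^ q ^ 4 = c := fun c => by
    rw [← hK]; exact FiniteField.pow_card c
  set T : K →+ K :=
    { toFun := fun c => c + c ^ q + c ^ q ^ 2 + c ^ q ^ 3
      map_zero' := by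
        simp [zero_pow, (by positivity : q ≠ 0), (by positivity : q ^ 2 ≠ 0),
          (by positivity : q ^ 3 ≠ 0)]
      map_add' := by
        intro a b
        show (a + b) + (a + b) ^ q + (a + b) ^ q ^ 2 + (a + b) ^ q ^ 3 = _
        have h1 := hfrob a b 1
        have h2 := hfrob a b 2
        have h3 := hfrob a b 3
        rw [pow_one] at h1
        rw [h1, h2, h3]
        show _ = (a + a ^ q + a ^ q ^ 2 + a ^ q ^ 3) + (b + b ^ q + b ^ q ^ 2 + b ^ q ^ 3)
        ring } with hT
  -- range bound
  have hrange_root : ∀ z : K, z ∈ T.range → z ^ q + z = 0 := by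
    rintro z ⟨c, rfl⟩
    show (c + c ^ q + c ^ q ^ 2 + c ^ q ^ 3) ^ q + _ = 0
    have e1 : (c + c ^ q + c ^ q ^ 2 + c ^ q ^ 3) ^ q
        = c ^ q + c ^ q ^ 2 + c ^ q ^ 3 + c := by
      have h1 := hfrob (c + c ^ q + c ^ q ^ 2) (c ^ q ^ 3) 1
      have h2 := hfrob (c + c ^ q) (c ^ q ^ 2) 1
      have h3 := hfrob c (c ^ q) 1
      rw [pow_one] at h1 h2 h3
      rw [h1, h2, h3]
      have p1 : (c ^ q) ^ q = c ^ q ^ 2 := by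
        have := ppq q c 1 1; rw [pow_one] at this; exact this
      have p2 : (c ^ q ^ 2) ^ q = c ^ q ^ 3 := by
        have := ppq q c 2 1; rw [pow_one] at this; exact this
      have p3 : (c ^ q ^ 3) ^ q = c := by
        have := ppq q c 3 1; rw [pow_one] at this; rw [this]; exact hc4 c
      rw [p1, p2, p3]
    rw [e1]
    have hs : ∀ w : K, w + w = 0 := CharTwo.add_self_eq_zero
    show c ^ q + c ^ q ^ 2 + c ^ q ^ 3 + c + (c + c ^ q + c ^ q ^ 2 + c ^ q ^ 3) = 0
    linear_combination hs c + hs (c ^ q) + hs (c ^ q ^ 2) + hs (c ^ q ^ 3)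
  have hrange_le : Nat.card T.range ≤ q := by
    set pr : Polynomial K := Polynomial.X ^ q + Polynomial.X with hpr
    have hpr0 : pr ≠ 0 := by
      intro h
      have hc : pr.coeff 1 = 1 := by
        rw [hpr, Polynomial.coeff_add, Polynomial.coeff_X_pow, Polynomial.coeff_X_one]
        simp [Nat.ne_of_lt hq2]
      rw [h] at hc; simp at hc
    have hdeg : pr.natDegree ≤ q := by
      refine le_trans (Polynomial.natDegree_add_le _ _) (max_le ?_ ?_)
      · simp [Polynomial.natDegree_X_pow]
      · simp [Polynomial.natDegree_X]; omega
    have hsub : (T.range : Set K) ⊆ {x : K | Polynomial.eval x pr = 0} := by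
      intro z hz
      have := hrange_root z hz
      simp only [Set.mem_setOf_eq, hpr, Polynomial.eval_add, Polynomial.eval_pow,
        Polynomial.eval_X]
      exact this
    have h1 : ((T.range : Set K)).ncard ≤ q :=
      le_trans (Set.ncard_le_ncard hsub (Set.toFinite _)) ((ncard_roots_le pr hpr0).trans hdeg)
    rwa [ncard_coe_addsubgroup] at h1
  -- kernel bound
  have hker_le : Nat.card T.ker ≤ q ^ 3 := by
    set pk : Polynomial K := Polynomial.X + Polynomial.X ^ q + Polynomial.X ^ q ^ 2
        + Polynomial.X ^ q ^ 3 with hpk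
    have hq21 : 1 < q ^ 2 := by nlinarith
    have hq31 : 1 < q ^ 3 := by nlinarith
    have hpk0 : pk ≠ 0 := by
      intro h
      have hc : pk.coeff 1 = 1 := by
        rw [hpk]
        simp only [Polynomial.coeff_add, Polynomial.coeff_X_pow, Polynomial.coeff_X_one]
        simp [Nat.ne_of_lt hq2, Nat.ne_of_lt hq21, Nat.ne_of_lt hq31]
      rw [h] at hc; simp at hc
    have hdeg : pk.natDegree ≤ q ^ 3 := by
      have hle3 : ∀ k, k ≤ 3 → q ^ k ≤ q ^ 3 := fun k hk =>
        Nat.pow_le_pow_right (by omega) hk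
      have b0 : (Polynomial.X : Polynomial K).natDegree ≤ q ^ 3 := by
        rw [Polynomial.natDegree_X]; nlinarith
      have b1 : ((Polynomial.X : Polynomial K) ^ q).natDegree ≤ q ^ 3 := by
        rw [Polynomial.natDegree_X_pow]; simpa using hle3 1 (by omega)
      have b2 : ((Polynomial.X : Polynomial K) ^ q ^ 2).natDegree ≤ q ^ 3 := by
        rw [Polynomial.natDegree_X_pow]; exact hle3 2 (by omega)
      have b3 : ((Polynomial.X : Polynomial K) ^ q ^ 3).natDegree ≤ q ^ 3 := by
        rw [Polynomial.natDegree_X_pow]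
      refine le_trans (Polynomial.natDegree_add_le _ _) (max_le ?_ b3)
      refine le_trans (Polynomial.natDegree_add_le _ _) (max_le ?_ b2)
      exact le_trans (Polynomial.natDegree_add_le _ _) (max_le b0 b1)
    have hsub : (T.ker : Set K) ⊆ {x : K | Polynomial.eval x pk = 0} := by
      intro z hz
      simp only [SetLike.mem_coe, AddMonoidHom.mem_ker] at hz
      simp only [Set.mem_setOf_eq, hpk, Polynomial.eval_add, Polynomial.eval_pow,
        Polynomial.eval_X]
      exact hz
    have h1 : ((T.ker : Set K)).ncard ≤ q ^ 3 :=
      le_trans (Set.ncard_le_ncard hsub (Set.toFinite _)) ((ncard_roots_le pk hpk0).trans hdeg)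
    rwa [ncard_coe_addsubgroup] at h1
  have hiso := card_ker_range T
  have hcardK : Nat.card K = q ^ 4 := by rw [Nat.card_eq_fintype_card, hK]
  have hker_eq : Nat.card T.ker = q ^ 3 := by
    have h1 : q ^ 4 ≤ q * Nat.card T.ker := by
      calc q ^ 4 = Nat.card T.range * Nat.card T.ker := by rw [← hcardK, hiso]
        _ ≤ q * Nat.card T.ker := Nat.mul_le_mul_right _ hrange_le
    have h2 : q ^ 3 ≤ Nat.card T.ker := by
      have hq0 : 0 < q := by omega
      refine Nat.le_of_mul_le_mul_left ?_ hq0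
      calc q * q ^ 3 = q ^ 4 := by ring
        _ ≤ q * Nat.card T.ker := h1
    omega
  have hfinal : {c : K | c + c ^ q + c ^ q ^ 2 + c ^ q ^ 3 = 0} = (T.ker : Set K) := by
    ext c
    simp only [Set.mem_setOf_eq, SetLike.mem_coe, AddMonoidHom.mem_ker]
    rfl
  rw [hfinal, ncard_coe_addsubgroup, hker_eq]

end Tau
section Key
variable {K : Type*} [Field K] [Fintype K] [CharP K 2]

private lemma key (n q : ℕ) (hn : 0 < n) (hq : q = 2 ^ n) (hK : Fintype.card K = q ^ 4)
    (c x : K)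
    (hτ0 : c + c ^ q + c ^ q ^ 2 + c ^ q ^ 3 ≠ 0)
    (hx2 : x ^ 2 + x
      = (((c + c ^ q ^ 2) + (c + c ^ q ^ 2) ^ q) / (c + c ^ q ^ 2) ^ (q + 1)) ^ 2)
    (hxq : x ^ q ^ 2 = x) :
    trp n (((c + (c + c ^ q ^ 2) * x) ^ (q ^ 2 + 1) + 1) ^ (q + 1)
        / (c + c ^ q + c ^ q ^ 2 + c ^ q ^ 3) ^ 2)
      + trp n ((c ^ (q ^ 2 + 1) + 1) ^ (q + 1)
        / (c + c ^ q + c ^ q ^ 2 + c ^ q ^ 3) ^ 2) = 1 := by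
  have hself : ∀ w : K, w + w = 0 := CharTwo.add_self_eq_zero
  have hq0 : q ≠ 0 := by subst hq; positivity
  have hc4 : ∀ y : K, y ^ q ^ 4 = y := fun y => by rw [← hK]; exact FiniteField.pow_card y
  have hfrob : ∀ (x y : K) (k : ℕ), (x + y) ^ q ^ k = x ^ q ^ k + y ^ q ^ k :=
    fun x y k => frob_addq hq x y k
  have hfrob1 : ∀ (x y : K), (x + y) ^ q = x ^ q + y ^ q := by
    intro a b; have := hfrob a b 1; rwa [pow_one] at this
  have h2n : (2 : ℕ) ^ n = q := hq.symm
  have h2nn : (2 : ℕ) ^ (n + n) = q ^ 2 := by subst hq; rw [← pow_mul]; congr 1; omega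
  set t := c + c ^ q ^ 2 with ht
  set τ := c + c ^ q + c ^ q ^ 2 + c ^ q ^ 3 with hτdef
  clear_value t τ
  -- τ = t + t^q
  have hτt : t + t ^ q = τ := by
    rw [ht, hfrob1]
    have h3 : (c ^ q ^ 2) ^ q = c ^ q ^ 3 := by
      have := ppq q c 2 1; rwa [pow_one] at this
    rw [h3, hτdef]; ring
  have htq2 : t ^ q ^ 2 = t := by
    rw [ht, hfrob c (c ^ q ^ 2) 2, ppq q c 2 2, hc4 c]
    ring
  have ht0 : t ≠ 0 := by
    intro h
    apply hτ0
    rw [← hτt, h, zero_pow hq0, add_zero]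
  have hτq : τ ^ q = τ := by
    rw [← hτt, hfrob1]
    have h3 : (t ^ q) ^ q = t ^ q ^ 2 := by
      have := ppq q t 1 1; rwa [pow_one] at this
    rw [h3, htq2]; ring
  set m := t ^ (q + 1) with hm
  clear_value m
  have hm0 : m ≠ 0 := by rw [hm]; exact pow_ne_zero _ ht0
  have hmq : m ^ q = m := by
    rw [hm, ← pow_mul]
    have he : (q + 1) * q = q ^ 2 + q := by ring
    rw [he, pow_add, htq2, pow_succ]
    ring
  rw [hτt] at hx2
  set v := τ / m with hv
  clear_value v
  have hvq : v ^ q = v := by rw [hv, div_pow, hτq, hmq]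
  set a := t * x with ha
  clear_value a
  have haq2 : a ^ q ^ 2 = a := by rw [ha, mul_pow, htq2, hxq]
  set h := a * t + a ^ 2 with hh
  clear_value h
  have hstep : h = t ^ 2 * (x ^ 2 + x) := by rw [hh, ha]; ring
  have hhval : h = τ ^ 2 / t ^ (2 * q) := by
    rw [hstep, hx2, hv, div_pow, mul_div_assoc',
      div_eq_div_iff (pow_ne_zero _ hm0) (pow_ne_zero _ ht0), hm]
    ring
  have hcom : ∀ (y : K) (e : ℕ), (y ^ 2) ^ e = (y ^ e) ^ 2 := by
    intro y e; rw [← pow_mul, mul_comm, pow_mul]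
  have ht2q : (t ^ (2 * q)) ^ q = t ^ 2 := by
    rw [← pow_mul]
    have he : 2 * q * q = q ^ 2 * 2 := by ring
    rw [he, pow_mul, htq2]
  have hhq : h ^ q = τ ^ 2 / t ^ 2 := by
    rw [hhval, div_pow, hcom τ q, hτq, ht2q]
  have hh1q : h ^ (q + 1) = τ ^ 4 / m ^ 2 := by
    rw [pow_succ, hhq, hhval, div_mul_div_comm,
      div_eq_div_iff (mul_ne_zero (pow_ne_zero _ ht0) (pow_ne_zero _ ht0))
        (pow_ne_zero _ hm0), hm]
    ring
  set n' := c ^ (q ^ 2 + 1) + 1 with hn'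
  clear_value n'
  have hK1 : (c + a) ^ (q ^ 2 + 1) + 1 = n' + h := by
    rw [pow_succ, hfrob c a 2, haq2, hn', hh, ha, ht]
    ring
  have hZtot : ((c + a) ^ (q ^ 2 + 1) + 1) ^ (q + 1)
      = n' ^ (q + 1) + (n' ^ q * h + n' * h ^ q + h ^ (q + 1)) := by
    rw [hK1]
    simp only [pow_succ]
    rw [hfrob1 n' h]
    ring
  rw [hZtot, add_div, trp_add]
  have hmain : trp n ((n' ^ q * h + n' * h ^ q + h ^ (q + 1)) / τ ^ 2) = 1 := by
    set w := n' / t ^ 2 with hw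
    clear_value w
    have e1 : n' ^ q * h / τ ^ 2 = w ^ q := by
      rw [hhval, hw, div_pow]
      field_simp
      ring
    have e2 : n' * h ^ q / τ ^ 2 = w := by
      rw [hw, hhq]
      field_simp
    have e3 : h ^ (q + 1) / τ ^ 2 = v ^ 2 := by
      rw [hh1q, hv, div_pow]
      field_simp
    have hRsplit : (n' ^ q * h + n' * h ^ q + h ^ (q + 1)) / τ ^ 2 = (w ^ q + w) + v ^ 2 := by
      rw [add_div, add_div, e1, e2, e3]
    rw [hRsplit, trp_add]
    have hv2 : trp n (v ^ 2) = trp n v := by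
      rw [trp_sq, h2n, hvq, hself, add_zero]
    have hwqw : trp n (w ^ q + w) = trp (n + n) w := by
      rw [trp_add, trp_split n n w, h2n]
      ring
    rw [hwqw, hv2]
    have hct : c ^ q ^ 2 = c + t := by rw [ht]; linear_combination (hself c).symm
    have hwsplit : w = c ^ (q ^ 2 + 1) / t ^ 2 + (1 / t) ^ 2 := by
      rw [hw, hn', add_div, div_pow, one_pow]
    have hA : trp (n + n) (c ^ (q ^ 2 + 1) / t ^ 2) = 1 := by
      have hcc : c ^ (q ^ 2 + 1) = c ^ 2 + c * t := by
        rw [pow_succ, hct]; ring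
      have hz : c ^ (q ^ 2 + 1) / t ^ 2 = (c / t) ^ 2 + c / t := by
        rw [hcc, div_pow]
        field_simp
      rw [hz, trp_telescope, h2nn, div_pow, htq2, hct, add_div, div_self ht0]
      linear_combination hself (c / t)
    have hB : trp (n + n) ((1 / t) ^ 2) = trp (n + n) (1 / t) := by
      rw [trp_sq, h2nn, div_pow, one_pow, htq2, hself, add_zero]
    have hvu : v = 1 / t + (1 / t) ^ q := by
      rw [hv, ← hτt, hm, div_pow, one_pow]
      field_simp
      ring
    have hvfin : trp n v = trp (n + n) (1 / t) := by
      rw [hvu, trp_add, trp_split n n (1 / t), h2n]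
    rw [hwsplit, trp_add, hA, hB, hvfin]
    linear_combination hself (trp (n + n) (1 / t))
  rw [hmain]
  linear_combination hself (trp n (n' ^ (q + 1) / τ ^ 2))

end Key
section Main

/-- The set `Λ` of `c ∈ 𝔽_{q⁴}ˣ` with `𝔱' ≠ 0` and
`Tr_2^q(𝔫'^{(q+1)/2}/𝔱') = 1` has cardinality `q³(q-1)/2`, where
`𝔱 = c + c^{q²}`, `𝔫 = c^{q²+1}`, `𝔱' = 𝔱 + 𝔱^q`, `𝔫' = 𝔫 + 1`, and
`𝔫'^{(q+1)/2}` is the unique square root `s` of `𝔫'^{q+1}`. -/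
theorem stmt9 (n : ℕ) (hn : 0 < n) (q : ℕ) (hq : q = 2 ^ n)
    (K : Type*) [Field K] [Fintype K] (hK : Fintype.card K = q ^ 4) :
    {c : K | c ≠ 0 ∧
        (c + c ^ q ^ 2) + (c + c ^ q ^ 2) ^ q ≠ 0 ∧
        ∃ s : K, s ^ 2 = (c ^ (q ^ 2 + 1) + 1) ^ (q + 1) ∧
          (∑ i ∈ Finset.range n,
            (s / ((c + c ^ q ^ 2) + (c + c ^ q ^ 2) ^ q)) ^ 2 ^ i) = 1}.ncard
      = q ^ 3 * (q - 1) / 2 := by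
  classical
  -- characteristic 2
  have hchar : CharP K 2 := by
    obtain ⟨m, hp, hcard⟩ := FiniteField.card K (ringChar K)
    have h1 : ringChar K ^ (m : ℕ) = 2 ^ (4 * n) := by
      rw [← hcard, hK, hq, ← pow_mul]
      congr 1
      omega
    have hdvd : ringChar K ∣ 2 ^ (4 * n) :=
      h1 ▸ dvd_pow_self (ringChar K) (PNat.pos m).ne'
    have h2 : ringChar K = 2 :=
      (Nat.prime_dvd_prime_iff_eq hp Nat.prime_two).mp (hp.dvd_of_dvd_pow hdvd)
    rw [← h2]
    exact ringChar.charP K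
  have hself : ∀ w : K, w + w = 0 := CharTwo.add_self_eq_zero
  have hq0 : q ≠ 0 := by subst hq; positivity
  have hq2' : 2 ≤ q := by subst hq; exact Nat.one_lt_two_pow (by omega)
  have hc4 : ∀ y : K, y ^ q ^ 4 = y := fun y => by rw [← hK]; exact FiniteField.pow_card y
  have hfrob : ∀ (x y : K) (k : ℕ), (x + y) ^ q ^ k = x ^ q ^ k + y ^ q ^ k :=
    fun x y k => frob_addq hq x y k
  have hfrob1 : ∀ (x y : K), (x + y) ^ q = x ^ q + y ^ q := by
    intro a b; have := hfrob a b 1; rwa [pow_one] at this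
  have h2n : (2 : ℕ) ^ n = q := hq.symm
  have h2nn : (2 : ℕ) ^ (n + n) = q ^ 2 := by subst hq; rw [← pow_mul]; congr 1; omega
  have hcom : ∀ (y : K) (e : ℕ), (y ^ 2) ^ e = (y ^ e) ^ 2 := by
    intro y e; rw [← pow_mul, mul_comm, pow_mul]
  -- abbreviations
  set τf : K → K := fun c => c + c ^ q + c ^ q ^ 2 + c ^ q ^ 3 with hτf
  set Zf : K → K := fun c => (c ^ (q ^ 2 + 1) + 1) ^ (q + 1) with hZf
  set ff : K → K := fun c => trp n (Zf c / (τf c) ^ 2) with hff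
  -- τ'-form conversion
  have htau : ∀ c : K, (c + c ^ q ^ 2) + (c + c ^ q ^ 2) ^ q = τf c := by
    intro c
    rw [hfrob1]
    have h3 : (c ^ q ^ 2) ^ q = c ^ q ^ 3 := by
      have := ppq q c 2 1; rwa [pow_one] at this
    show _ = c + c ^ q + c ^ q ^ 2 + c ^ q ^ 3
    rw [h3]; ring
  have hτq : ∀ c : K, (τf c) ^ q = τf c := by
    intro c
    show (c + c ^ q + c ^ q ^ 2 + c ^ q ^ 3) ^ q = c + c ^ q + c ^ q ^ 2 + c ^ q ^ 3
    rw [hfrob1, hfrob1, hfrob1]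
    have p1 : (c ^ q) ^ q = c ^ q ^ 2 := by
      have := ppq q c 1 1; rwa [pow_one] at this
    have p2 : (c ^ q ^ 2) ^ q = c ^ q ^ 3 := by
      have := ppq q c 2 1; rwa [pow_one] at this
    have p3 : (c ^ q ^ 3) ^ q = c := by
      have := ppq q c 3 1; rw [pow_one] at this; rw [this]; exact hc4 c
    rw [p1, p2, p3]; ring
  have hZq : ∀ c : K, (Zf c) ^ q = Zf c := by
    intro c
    show ((c ^ (q ^ 2 + 1) + 1) ^ (q + 1)) ^ q = (c ^ (q ^ 2 + 1) + 1) ^ (q + 1)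
    have hn'q2 : (c ^ (q ^ 2 + 1) + 1) ^ q ^ 2 = c ^ (q ^ 2 + 1) + 1 := by
      rw [hfrob (c ^ (q ^ 2 + 1)) 1 2, one_pow, ← pow_mul]
      have he : (q ^ 2 + 1) * q ^ 2 = q ^ 4 + q ^ 2 := by ring
      rw [he, pow_add, hc4 c, pow_succ]
      ring
    rw [← pow_mul]
    have he : (q + 1) * q = q ^ 2 + q := by ring
    rw [he, pow_add, hn'q2, pow_succ]
    ring
  have hτ0zero : τf (0 : K) = 0 := by
    show (0 : K) + 0 ^ q + 0 ^ q ^ 2 + 0 ^ q ^ 3 = 0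
    rw [zero_pow hq0, zero_pow (pow_ne_zero 2 hq0), zero_pow (pow_ne_zero 3 hq0)]
    ring
  -- square roots exist
  have hsqsurj : ∀ z : K, ∃ s : K, s ^ 2 = z := by
    have hinj : Function.Injective (fun y : K => y ^ 2) := by
      intro y1 y2 hy
      simp only at hy
      have h0 : (y1 + y2) ^ 2 = 0 := by rw [CharTwo.add_sq, hy]; exact hself _
      have h1 : y1 + y2 = 0 := by
        exact pow_eq_zero_iff (two_ne_zero) |>.mp h0
      linear_combination h1 - hself y2
    have hsurj := Finite.injective_iff_surjective.mp hinj
    intro z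
    obtain ⟨s, hs⟩ := hsurj z
    exact ⟨s, hs⟩
  -- reduction of the trace condition
  have htrp_eq : ∀ c s : K, τf c ≠ 0 → s ^ 2 = Zf c →
      trp n (s / τf c) = ff c := by
    intro c s hτc hs
    have hy2 : (s / τf c) ^ 2 = Zf c / (τf c) ^ 2 := by rw [div_pow, hs]
    have hy2q : ((s / τf c) ^ 2) ^ q = (s / τf c) ^ 2 := by
      rw [hy2, div_pow, hZq, hcom, hτq]
    have hyq : (s / τf c) ^ q = s / τf c := by
      have h0 : ((s / τf c) ^ q + s / τf c) ^ 2 = 0 := by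
        rw [CharTwo.add_sq, ← hcom, hy2q]
        exact hself _
      have h1 : (s / τf c) ^ q + s / τf c = 0 :=
        pow_eq_zero_iff (two_ne_zero) |>.mp h0
      linear_combination h1 - hself (s / τf c)
    have := trp_sq (K := K) n (s / τf c)
    rw [h2n, hyq, hself, add_zero] at this
    rw [hff]
    show trp n (s / τf c) = trp n (Zf c / τf c ^ 2)
    rw [← hy2, this]
  -- the set in the statement equals {c | τf c ≠ 0 ∧ ff c = 1}
  have hset : {c : K | c ≠ 0 ∧
        (c + c ^ q ^ 2) + (c + c ^ q ^ 2) ^ q ≠ 0 ∧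
        ∃ s : K, s ^ 2 = (c ^ (q ^ 2 + 1) + 1) ^ (q + 1) ∧
          (∑ i ∈ Finset.range n,
            (s / ((c + c ^ q ^ 2) + (c + c ^ q ^ 2) ^ q)) ^ 2 ^ i) = 1}
      = {c : K | τf c ≠ 0 ∧ ff c = 1} := by
    ext c
    simp only [Set.mem_setOf_eq]
    constructor
    · rintro ⟨hc0, hτc, s, hs2, hs1⟩
      rw [htau c] at hτc
      refine ⟨hτc, ?_⟩
      have hs1' : trp n (s / ((c + c ^ q ^ 2) + (c + c ^ q ^ 2) ^ q)) = 1 := hs1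
      rw [htau c] at hs1'
      rw [← htrp_eq c s hτc hs2]
      exact hs1'
    · rintro ⟨hτc, hfc⟩
      have hc0 : c ≠ 0 := by
        rintro rfl
        exact hτc hτ0zero
      refine ⟨hc0, by rw [htau c]; exact hτc, ?_⟩
      obtain ⟨s, hs2⟩ := hsqsurj (Zf c)
      refine ⟨s, hs2, ?_⟩
      have : trp n (s / ((c + c ^ q ^ 2) + (c + c ^ q ^ 2) ^ q)) = 1 := by
        rw [htau c, htrp_eq c s hτc hs2]
        exact hfc
      exact this
  rw [hset]
  -- cardinality of the complement
  have hcompl : {c : K | τf c = 0}.ncard = q ^ 3 := by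
    have hseteq : {c : K | τf c = 0} = {c : K | c + c ^ q + c ^ q ^ 2 + c ^ q ^ 3 = 0} := by
      ext c; simp only [hτf, Set.mem_setOf_eq]
    rw [hseteq]
    exact card_tau n q hn hq hK
  have hcardK : Nat.card K = q ^ 4 := by rw [Nat.card_eq_fintype_card, hK]
  have hVcard : {c : K | τf c ≠ 0}.ncard = q ^ 4 - q ^ 3 := by
    have h0 := Set.ncard_add_ncard_compl {c : K | τf c = 0} (Set.toFinite _) (Set.toFinite _)
    have hco : {c : K | τf c = 0}ᶜ = {c : K | τf c ≠ 0} := by ext c; simp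
    rw [hco, hcompl, hcardK] at h0
    omega
  -- choice of the shift element
  have hK' : Fintype.card K = 2 ^ ((n + n) + (n + n)) := by
    rw [hK, hq, ← pow_mul]; congr 1; omega
  have hex : ∀ t : K, ∃ x : K, t ^ q ^ 2 = t → t + t ^ q ≠ 0 →
      (x ^ 2 + x = ((t + t ^ q) / t ^ (q + 1)) ^ 2 ∧ x ^ q ^ 2 = x) := by
    intro t
    by_cases hc : t ^ q ^ 2 = t ∧ t + t ^ q ≠ 0
    · obtain ⟨ht2, hτt0⟩ := hc
      have ht0 : t ≠ 0 := by
        intro h; apply hτt0; rw [h, zero_pow hq0, add_zero]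
      have htq' : (t ^ q) ^ q = t ^ q ^ 2 := by
        have := ppq q t 1 1; rwa [pow_one] at this
      have hnum : (t + t ^ q) ^ q = t ^ q + t := by
        rw [hfrob1, htq', ht2]
      have hden : (t ^ (q + 1)) ^ q = t ^ (q + 1) := by
        rw [← pow_mul]
        have he : (q + 1) * q = q ^ 2 + q := by ring
        rw [he, pow_add, ht2, pow_succ]; ring
      set v : K := (t + t ^ q) / t ^ (q + 1) with hv
      have hvq : v ^ q = v := by
        rw [hv, div_pow, hnum, hden, add_comm]
      have hv2q2 : (v ^ 2) ^ 2 ^ (n + n) = v ^ 2 := by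
        rw [h2nn, hcom]
        congr 1
        rw [show (q : ℕ) ^ 2 = q * q from sq q, pow_mul, hvq, hvq]
      have hvtrp : trp ((n + n) + (n + n)) (v ^ 2) = 0 := trp_two (n + n) _ hv2q2
      obtain ⟨x, hx⟩ := artin ((n + n) + (n + n)) (by omega) hK' (v ^ 2) hvtrp
      have hxq2 : x ^ q ^ 2 = x := by
        have h1 : trp (n + n) (x ^ 2 + x) = x ^ 2 ^ (n + n) + x := trp_telescope _ x
        have hv2q : (v ^ 2) ^ 2 ^ n = v ^ 2 := by rw [h2n, hcom, hvq]
        have h2 : trp (n + n) (v ^ 2) = 0 := trp_two n _ hv2q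
        rw [hx, h2] at h1
        rw [← h2nn]
        linear_combination h1.symm - hself x
      exact ⟨x, fun _ _ => ⟨hx, hxq2⟩⟩
    · exact ⟨0, fun h1 h2 => absurd ⟨h1, h2⟩ hc⟩
  choose x0 hx0 using hex
  set σ : K → K := fun c => c + (c + c ^ q ^ 2) * x0 (c + c ^ q ^ 2) with hσ
  have htfix : ∀ c a : K, a ^ q ^ 2 = a → (c + a) + (c + a) ^ q ^ 2 = c + c ^ q ^ 2 := by
    intro c a ha
    rw [hfrob c a 2, ha]
    linear_combination hself a
  have hτshift : ∀ c a : K, a ^ q ^ 2 = a → τf (c + a) = τf c := by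
    intro c a ha
    show (c + a) + (c + a) ^ q + (c + a) ^ q ^ 2 + (c + a) ^ q ^ 3
        = c + c ^ q + c ^ q ^ 2 + c ^ q ^ 3
    have h1 : (c + a) ^ q = c ^ q + a ^ q := hfrob1 c a
    have h2 : (c + a) ^ q ^ 2 = c ^ q ^ 2 + a := by rw [hfrob c a 2, ha]
    have h3 : (c + a) ^ q ^ 3 = c ^ q ^ 3 + a ^ q := by
      rw [hfrob c a 3]
      congr 1
      have hpq : (a ^ q ^ 2) ^ q = a ^ q ^ 3 := by
        have := ppq q a 2 1; rwa [pow_one] at this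
      rw [← hpq, ha]
    rw [h1, h2, h3]
    linear_combination hself a + hself (a ^ q)
  have hprops : ∀ c : K, τf c ≠ 0 →
      (τf (σ c) = τf c) ∧ (σ (σ c) = c) ∧ (ff (σ c) + ff c = 1) := by
    intro c hτc
    have ht2 : (c + c ^ q ^ 2) ^ q ^ 2 = c + c ^ q ^ 2 := by
      rw [hfrob c (c ^ q ^ 2) 2, ppq q c 2 2, hc4 c]; ring
    have hτt0 : (c + c ^ q ^ 2) + (c + c ^ q ^ 2) ^ q ≠ 0 := by
      rw [htau c]; exact hτc
    obtain ⟨hx2c, hxqc⟩ := hx0 (c + c ^ q ^ 2) ht2 hτt0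
    have haq2 : ((c + c ^ q ^ 2) * x0 (c + c ^ q ^ 2)) ^ q ^ 2
        = (c + c ^ q ^ 2) * x0 (c + c ^ q ^ 2) := by
      rw [mul_pow, ht2, hxqc]
    have hτσ : τf (σ c) = τf c := hτshift c _ haq2
    have htσ : (σ c) + (σ c) ^ q ^ 2 = c + c ^ q ^ 2 := htfix c _ haq2
    refine ⟨hτσ, ?_, ?_⟩
    · show σ c + (σ c + (σ c) ^ q ^ 2) * x0 (σ c + (σ c) ^ q ^ 2) = c
      rw [htσ]
      show c + (c + c ^ q ^ 2) * x0 (c + c ^ q ^ 2)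
          + (c + c ^ q ^ 2) * x0 (c + c ^ q ^ 2) = c
      linear_combination hself ((c + c ^ q ^ 2) * x0 (c + c ^ q ^ 2))
    · have hk := key n q hn hq hK c (x0 (c + c ^ q ^ 2)) hτc hx2c hxqc
      show trp n (Zf (σ c) / (τf (σ c)) ^ 2) + trp n (Zf c / (τf c) ^ 2) = 1
      rw [hτσ]
      exact hk
  have hf01 : ∀ c : K, τf c ≠ 0 → ff c = 0 ∨ ff c = 1 := by
    intro c hτc
    have hyq : (Zf c / (τf c) ^ 2) ^ 2 ^ n = Zf c / (τf c) ^ 2 := by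
      rw [h2n, div_pow, hZq, hcom, hτq]
    exact trp_zero_or_one n _ hyq
  set Λ : Set K := {c : K | τf c ≠ 0 ∧ ff c = 1} with hΛ
  set V : Set K := {c : K | τf c ≠ 0} with hV
  have hΛV : Λ ⊆ V := fun c hc => hc.1
  have himg : σ '' Λ = V \ Λ := by
    ext d
    constructor
    · rintro ⟨c, ⟨hτc, hfc⟩, rfl⟩
      obtain ⟨hτσ, hσσ, hflip⟩ := hprops c hτc
      refine ⟨?_, ?_⟩
      · show τf (σ c) ≠ 0
        rw [hτσ]; exact hτc
      · intro hmem
        have hfσ : ff (σ c) = 1 := hmem.2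
        rw [hfσ, hfc] at hflip
        have h01 : (0 : K) = 1 := by linear_combination hflip - hself 1
        exact zero_ne_one h01
    · rintro ⟨hdV, hdΛ⟩
      have hτd : τf d ≠ 0 := hdV
      have hfd : ff d = 0 := by
        rcases hf01 d hτd with h | h
        · exact h
        · exact absurd ⟨hτd, h⟩ hdΛ
      obtain ⟨hτσ, hσσ, hflip⟩ := hprops d hτd
      refine ⟨σ d, ⟨?_, ?_⟩, hσσ⟩
      · show τf (σ d) ≠ 0
        rw [hτσ]; exact hτd
      · rw [hfd, add_zero] at hflip; exact hflip
  have hinj : Set.InjOn σ Λ := by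
    intro c1 h1 c2 h2 he
    have e1 := (hprops c1 h1.1).2.1
    have e2 := (hprops c2 h2.1).2.1
    rw [← e1, ← e2, he]
  have hcnt1 : (V \ Λ).ncard = Λ.ncard := by
    rw [← himg, Set.ncard_image_of_injOn hinj]
  have hcnt2 : (V \ Λ).ncard + Λ.ncard = V.ncard :=
    Set.ncard_diff_add_ncard_of_subset hΛV (Set.toFinite _)
  have hVc : V.ncard = q ^ 4 - q ^ 3 := hVcard
  have h2Λ : 2 * Λ.ncard = q ^ 4 - q ^ 3 := by omega
  have hmul : q ^ 3 * (q - 1) = q ^ 4 - q ^ 3 := by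
    obtain ⟨k, hk⟩ := Nat.exists_eq_add_of_le (show 1 ≤ q by omega)
    subst hk
    have h4 : (1 + k) ^ 4 = (1 + k) ^ 3 * (1 + k) := by ring
    have h1 : 1 + k - 1 = k := by omega
    rw [h4, h1, Nat.mul_add, Nat.mul_one, Nat.add_sub_cancel_left]
  rw [← hmul] at h2Λ
  rw [← h2Λ, Nat.mul_div_cancel_left _ (by norm_num : 0 < 2)]

end Main
end

section
/- Let $n$ be a positive integer, $q = 2^n$, and $d = q^3 + q^2 + q - 1$. For $b = 1$, the equation $x^d + (x+1)^d = 1$ has exactly $q^2$ solutions $x \in \mathbb{F}_{q^4}$. -/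
open Polynomial

/-- For `b = 1` the equation `x^d + (x+1)^d = 1`, `d = q³+q²+q-1`, has exactly
`q²` solutions in `𝔽_{q⁴}`. -/
theorem stmt10 (n : ℕ) (hn : 0 < n) (q : ℕ) (hq : q = 2 ^ n)
    (K : Type*) [Field K] [Fintype K] (hK : Fintype.card K = q ^ 4)
    (d : ℕ) (hd : d = q ^ 3 + q ^ 2 + q - 1) :
    {x : K | x ^ d + (x + 1) ^ d = 1}.ncard = q ^ 2 := by
  classical
  have hq2 : 2 ≤ q := by
    subst hq
    calc 2 = 2 ^ 1 := rfl
    _ ≤ 2 ^ n := Nat.pow_le_pow_right (by norm_num) hn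
  have hq1 : 0 < q := by omega
  -- characteristic 2
  have h2 : (2 : K) = 0 := by
    have h := FiniteField.cast_card_eq_zero K
    rw [hK, hq] at h
    push_cast at h
    rw [← pow_mul] at h
    exact pow_eq_zero_iff (by positivity) |>.mp h
  have hring : ringChar K = 2 := CharP.ringChar_of_prime_eq_zero Nat.prime_two h2
  haveI hchar : CharP K 2 := hring ▸ ringChar.charP K
  haveI : Fact (Nat.Prime 2) := ⟨Nat.prime_two⟩
  -- frobenius additivity
  have frobn : ∀ (u v : K) (m : ℕ), (u + v) ^ 2 ^ m = u ^ 2 ^ m + v ^ 2 ^ m :=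
    fun u v m => add_pow_char_pow u v 2 m
  have frobq : ∀ u v : K, (u + v) ^ q = u ^ q + v ^ q := by
    intro u v; rw [hq]; exact frobn u v n
  have hq2n : q ^ 2 = 2 ^ (2 * n) := by rw [hq, ← pow_mul, mul_comm]
  have frobq2 : ∀ u v : K, (u + v) ^ q ^ 2 = u ^ q ^ 2 + v ^ q ^ 2 := by
    intro u v; rw [hq2n]; exact frobn u v (2 * n)
  have hcard : ∀ x : K, x ^ q ^ 4 = x := by
    intro x; rw [← hK]; exact FiniteField.pow_card x
  have powqq : ∀ w : K, w ^ q ^ 2 = (w ^ q) ^ q := by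
    intro w; rw [show q ^ 2 = q * q from sq q, pow_mul]
  have powq3 : ∀ w : K, w ^ q ^ 3 = (w ^ q ^ 2) ^ q := by
    intro w; rw [show q ^ 3 = q ^ 2 * q by ring, pow_mul]
  have powq4 : ∀ w : K, (w ^ q ^ 2) ^ q ^ 2 = w := by
    intro w; rw [← pow_mul, show q ^ 2 * q ^ 2 = q ^ 4 by ring]; exact hcard w
  have sqeq : ∀ u v : K, u * u = v * v → u = v := by
    intro u v h
    have h0 : (u + v) * (u + v) = 0 := by
      linear_combination h + u * v * h2 + v * v * h2
    have h1 := mul_self_eq_zero.mp h0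
    linear_combination h1 - v * h2
  -- exponent arithmetic
  have hd1 : d + 1 = q ^ 3 + q ^ 2 + q := by
    rcases Nat.exists_eq_add_of_le
      (show 1 ≤ q ^ 3 + q ^ 2 + q from Nat.one_le_iff_ne_zero.mpr (by positivity))
      with ⟨M, hM⟩
    rw [hd, hM]; omega
  have hd2 : d + 2 = q ^ 3 + q ^ 2 + q + 1 := by omega
  have hd0 : d ≠ 0 := by
    have : 8 ≤ q ^ 3 := by
      calc (8:ℕ) = 2 ^ 3 := rfl
      _ ≤ q ^ 3 := Nat.pow_le_pow_left hq2 3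
    omega
  -- the target set equals the fixed set of the q²-power map
  have hST : {x : K | x ^ d + (x + 1) ^ d = 1} = {x : K | x ^ q ^ 2 = x} := by
    ext x
    simp only [Set.mem_setOf_eq]
    constructor
    · -- equation implies x ∈ F_{q²}
      intro hE
      obtain ⟨a, ha⟩ : ∃ a : K, a = x ^ (d + 2) := ⟨_, rfl⟩
      obtain ⟨b, hb⟩ : ∃ b : K, b = (x + 1) ^ (d + 2) := ⟨_, rfl⟩
      have key : ∀ y : K, (y ^ (d + 2)) ^ q = y ^ (d + 2) := by
        intro y
        calc (y ^ (d + 2)) ^ q = y ^ (q ^ 4) * y ^ (q ^ 3 + q ^ 2 + q) := by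
              rw [← pow_mul, ← pow_add]; congr 1; rw [hd2]; ring
          _ = y * y ^ (q ^ 3 + q ^ 2 + q) := by rw [hcard]
          _ = y ^ (d + 2) := by rw [hd2, pow_succ]; ring
      have haq : a ^ q = a := by rw [ha]; exact key x
      have hbq : b ^ q = b := by rw [hb]; exact key (x + 1)
      obtain ⟨c, hc⟩ : ∃ c : K, c = 1 + a + b := ⟨_, rfl⟩
      have hcq : c ^ q = c := by
        rw [hc, frobq, frobq, one_pow, haq, hbq]
      have Eq0 : a * (x + 1) ^ 2 + b * x ^ 2 = x ^ 2 * (x + 1) ^ 2 := by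
        calc a * (x + 1) ^ 2 + b * x ^ 2
            = (x ^ d + (x + 1) ^ d) * (x ^ 2 * (x + 1) ^ 2) := by
              rw [ha, hb, pow_add, pow_add]; ring
          _ = x ^ 2 * (x + 1) ^ 2 := by rw [hE, one_mul]
      obtain ⟨y, hy⟩ : ∃ y : K, y = x ^ 2 := ⟨_, rfl⟩
      have Eq1 : y ^ 2 = c * y + a := by
        rw [hy, hc]
        linear_combination Eq0 + (x ^ 4 + x ^ 3 - a * x ^ 2 - b * x ^ 2 - a * x - a) * h2
      obtain ⟨z, hzdef⟩ : ∃ z : K, z = y ^ q := ⟨_, rfl⟩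
      have Eq1q : z ^ 2 = c * z + a := by
        calc z ^ 2 = (y ^ 2) ^ q := by rw [hzdef, pow_right_comm]
          _ = (c * y + a) ^ q := by rw [Eq1]
          _ = c ^ q * y ^ q + a ^ q := by rw [frobq, mul_pow]
          _ = c * z + a := by rw [hcq, haq, hzdef]
      have hfac : (y + z) * (y + z + c) = 0 := by
        linear_combination Eq1 + Eq1q + (y * z + c * y + c * z + a) * h2
      rcases mul_eq_zero.mp hfac with hcase | hcase
      · -- y = z : x^q = x
        have hz_eq : z = y := by linear_combination hcase - y * h2
        have hxq : x ^ q = x := by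
          apply sqeq
          calc x ^ q * x ^ q = (x ^ 2) ^ q := by rw [← sq, pow_right_comm]
            _ = y ^ q := by rw [← hy]
            _ = y := by rw [← hzdef, hz_eq]
            _ = x * x := by rw [hy, sq]
        rw [powqq, hxq, hxq]
      · -- z = y + c and then y^{q²} = y
        have hz_eq : z = y + c := by linear_combination hcase - c * h2 - y * h2
        have hzq : z ^ q = z + c := by
          calc z ^ q = y ^ q + c ^ q := by rw [hz_eq, frobq]
            _ = z + c := by rw [hcq, ← hzdef]
        have hyq2 : y ^ q ^ 2 = y := by
          calc y ^ q ^ 2 = (y ^ q) ^ q := powqq y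
            _ = z ^ q := by rw [hzdef]
            _ = z + c := hzq
            _ = y := by rw [hz_eq]; linear_combination c * h2
        apply sqeq
        calc x ^ q ^ 2 * x ^ q ^ 2 = (x ^ 2) ^ q ^ 2 := by rw [← sq, pow_right_comm]
          _ = y ^ q ^ 2 := by rw [← hy]
          _ = y := hyq2
          _ = x * x := by rw [hy, sq]
    · -- x ∈ F_{q²} implies the equation
      intro hx
      by_cases hx0 : x = 0
      · subst hx0
        rw [zero_pow hd0, zero_add, zero_add, one_pow]
      by_cases hx1 : x = 1
      · subst hx1
        rw [one_pow, show (1 : K) + 1 = 0 by linear_combination h2, zero_pow hd0, add_zero]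
      have hx10 : x + 1 ≠ 0 := by
        intro h; apply hx1; linear_combination h - h2
      have hx1q2 : (x + 1) ^ q ^ 2 = x + 1 := by
        rw [frobq2, one_pow, hx]
      have powd : ∀ y : K, y ≠ 0 → y ^ q ^ 2 = y → y ^ d = y ^ (2 * q) := by
        intro y hy0 hyq
        have e3 : y ^ q ^ 3 = y ^ q := by rw [powq3, hyq]
        have h1 : y ^ d * y = y ^ (2 * q) * y := by
          calc y ^ d * y = y ^ (d + 1) := by rw [pow_succ]
            _ = y ^ q ^ 3 * y ^ q ^ 2 * y ^ q := by rw [hd1, pow_add, pow_add]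
            _ = y ^ q * y * y ^ q := by rw [e3, hyq]
            _ = y ^ (2 * q) * y := by rw [two_mul, pow_add]; ring
        exact mul_right_cancel₀ hy0 h1
      rw [powd x hx0 hx, powd (x + 1) hx10 hx1q2]
      have h2q : 2 * q = 2 ^ (n + 1) := by rw [hq, pow_succ]; ring
      have hxp1 : (x + 1) ^ (2 * q) = x ^ (2 * q) + 1 := by
        rw [h2q, frobn, one_pow]
      rw [hxp1]
      linear_combination x ^ (2 * q) * h2
  rw [hST]
  -- now count the fixed points of the q²-power map
  have hq20 : q ^ 2 ≠ 0 := by positivity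
  let f : K →+ K :=
    { toFun := fun x => x ^ q ^ 2 + x
      map_zero' := by
        show (0 : K) ^ q ^ 2 + 0 = 0
        rw [zero_pow hq20, add_zero]
      map_add' := by
        intro u v
        show (u + v) ^ q ^ 2 + (u + v) = (u ^ q ^ 2 + u) + (v ^ q ^ 2 + v)
        rw [frobq2]; ring }
  have hfdef : ∀ x : K, f x = x ^ q ^ 2 + x := fun _ => rfl
  have hker : (f.ker : Set K) = {x : K | x ^ q ^ 2 = x} := by
    ext x
    simp only [SetLike.mem_coe, AddMonoidHom.mem_ker, hfdef, Set.mem_setOf_eq]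
    constructor
    · intro h
      rw [eq_neg_of_add_eq_zero_left h, CharTwo.neg_eq]
    · intro h
      rw [h]
      linear_combination x * h2
  -- upper bound: fixed points are roots of X^{q²} - X
  have hTfin : ({x : K | x ^ q ^ 2 = x}).Finite := Set.toFinite _
  have hub : ({x : K | x ^ q ^ 2 = x}).ncard ≤ q ^ 2 := by
    have hq2gt : 1 < q ^ 2 := by nlinarith
    have hne : (X ^ q ^ 2 - X : K[X]) ≠ 0 := FiniteField.X_pow_card_sub_X_ne_zero K hq2gt
    have hsub : hTfin.toFinset.val ⊆ (X ^ q ^ 2 - X : K[X]).roots := by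
      intro x hx
      rw [Finset.mem_val, Set.Finite.mem_toFinset] at hx
      rw [mem_roots hne]
      simp only [IsRoot, eval_sub, eval_pow, eval_X]
      rw [hx, sub_self]
    have hcardle := Polynomial.card_le_degree_of_subset_roots hsub
    rw [FiniteField.X_pow_card_sub_X_natDegree_eq K hq2gt] at hcardle
    rwa [Set.ncard_eq_toFinset_card _ hTfin]
  -- lower bound via first isomorphism theorem
  have hrange_le : f.range ≤ f.ker := by
    rintro _ ⟨x, rfl⟩
    rw [AddMonoidHom.mem_ker, hfdef, hfdef, frobq2, powq4 x]
    linear_combination (x + x ^ q ^ 2) * h2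
  have hcardK : Nat.card K = q ^ 4 := by rw [Nat.card_eq_fintype_card, hK]
  have hiso : Nat.card (K ⧸ f.ker) = Nat.card f.range :=
    Nat.card_congr (QuotientAddGroup.quotientKerEquivRange f).toEquiv
  have hprod : q ^ 4 = Nat.card f.range * Nat.card f.ker := by
    rw [← hcardK, ← hiso]
    exact AddSubgroup.card_eq_card_quotient_mul_card_addSubgroup f.ker
  have hrk : Nat.card f.range ≤ Nat.card f.ker := AddSubgroup.card_le_of_le hrange_le
  have hkerT : Nat.card f.ker = ({x : K | x ^ q ^ 2 = x}).ncard := by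
    rw [← hker]
    exact Nat.card_coe_set_eq _
  have hkub : Nat.card f.ker ≤ q ^ 2 := by rw [hkerT]; exact hub
  have hklb : q ^ 2 ≤ Nat.card f.ker := by nlinarith [hprod, hrk, hkub]
  omega
end

section
/- Let $q = 2^n$ and let $\mathfrak{n}' \in \mathbb{F}_{q^2}^*$ and $\mathfrak{t}' \in \mathbb{F}_q^*$. Suppose $z_1, z_2 \in \mathbb{F}_{q^2}$ are the two distinct roots of $\mathfrak{n}' z^2 + \mathfrak{t}' z + \mathfrak{n}'^q = 0$. Then both $z_1$ and $z_2$ lie in $\mu_{q+1}$ if and only if $\mathrm{Tr}_2^q(\mathfrak{n}'^{q+1}/\mathfrak{t}'^2) = 1$. -/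
/-- If `z₁ ≠ z₂` are the two roots in `𝔽_{q²}` of `𝔫'z² + 𝔱'z + 𝔫'^q = 0`
with `𝔫' ∈ 𝔽_{q²}ˣ`, `𝔱' ∈ 𝔽_qˣ`, then `z₁, z₂ ∈ μ_{q+1}` iff
`Tr_2^q(𝔫'^{q+1}/𝔱'²) = 1`. -/
theorem stmt15 (n : ℕ) (hn : 0 < n) (q : ℕ) (hq : q = 2 ^ n)
    (K : Type*) [Field K] [Fintype K] (hK : Fintype.card K = q ^ 2)
    (n' t' : K) (hn' : n' ≠ 0) (ht'0 : t' ≠ 0) (ht' : t' ^ q = t')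
    (z1 z2 : K) (hz : z1 ≠ z2)
    (h1 : n' * z1 ^ 2 + t' * z1 + n' ^ q = 0)
    (h2 : n' * z2 ^ 2 + t' * z2 + n' ^ q = 0) :
    (z1 ^ (q + 1) = 1 ∧ z2 ^ (q + 1) = 1) ↔
      (∑ i ∈ Finset.range n, (n' ^ (q + 1) / t' ^ 2) ^ 2 ^ i) = 1 := by
  -- characteristic 2
  haveI hch : CharP K 2 := by
    have hp : (ringChar K).Prime := CharP.char_is_prime K _
    obtain ⟨m, hm, hcard⟩ := FiniteField.card K (ringChar K)
    have h2 : ringChar K = 2 := by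
      have hd : ringChar K ∣ 2 ^ (2*n) := by
        have : (2:ℕ) ^ (2*n) = ringChar K ^ (m:ℕ) := by
          rw [← hcard, hK, hq, ← pow_mul, Nat.mul_comm]
        rw [this]; exact dvd_pow_self _ m.pos.ne'
      exact (Nat.prime_dvd_prime_iff_eq hp Nat.prime_two).mp (hp.dvd_of_dvd_pow hd)
    rw [← h2]; exact ringChar.charP K
  have h2K : (2:K) = 0 := by exact_mod_cast CharP.cast_eq_zero K 2
  set x : K := n' ^ (q + 1) / t' ^ 2 with hxdef
  set T : K := ∑ i ∈ Finset.range n, x ^ 2 ^ i with hTdef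
  -- Frobenius facts
  have hq2 : ∀ a : K, a ^ (q * q) = a := by
    intro a
    have := FiniteField.pow_card a
    rwa [hK, pow_two] at this
  have hxq : x ^ q = x := by
    rw [hxdef, div_pow, ← pow_mul, ← pow_mul]
    have e1 : n' ^ ((q+1)*q) = n' ^ (q+1) := by
      rw [add_mul, one_mul, pow_add, hq2 n', pow_succ, mul_comm]
    have e2 : t' ^ (2*q) = t' ^ 2 := by
      rw [mul_comm, pow_mul, ht']
    rw [e1, e2]
  -- key claim for any root
  have key : ∀ z : K, n' * z ^ 2 + t' * z + n' ^ q = 0 → (z ^ (q + 1) = 1 ↔ T = 1) := by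
    intro z hzeq
    have hzne : z ≠ 0 := by
      intro h0
      apply pow_ne_zero q hn'
      simpa [h0] using hzeq
    set w : K := n' * z / t' with hwdef
    have hwne : w ≠ 0 := div_ne_zero (mul_ne_zero hn' hzne) ht'0
    have hw2 : w ^ 2 = w + x := by
      rw [hwdef, hxdef]
      field_simp
      linear_combination n' * hzeq - (n' * z * t' + n' ^ (q+1)) * h2K
    -- iterated Frobenius
    have hiter : ∀ k : ℕ, w ^ 2 ^ k = w + ∑ i ∈ Finset.range k, x ^ 2 ^ i := by
      intro k
      induction k with
      | zero => simp
      | succ k ih =>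
        rw [pow_succ, pow_mul, ih, CharTwo.add_sq, hw2, CharTwo.sum_sq]
        rw [Finset.sum_range_succ' (fun i => x ^ 2 ^ i)]
        simp only [pow_zero, pow_one]
        have : ∀ i, (x ^ 2 ^ i) ^ 2 = x ^ 2 ^ (i+1) := by
          intro i; rw [← pow_mul, pow_succ]
        simp_rw [this]
        ring
    have hwq : w ^ q = w + T := by rw [hq, hiter n]
    have hz2 : z = t' * w / n' := by
      rw [hwdef]; field_simp
    have hzq' : z ^ q = t' * w ^ q / n' ^ q := by
      rw [hz2, div_pow, mul_pow, ht']
    have hnqne : n' ^ q ≠ 0 := pow_ne_zero _ hn'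
    have hzq : z ^ (q+1) = t' ^ 2 * (w ^ q * w) / (n' ^ q * n') := by
      rw [pow_succ, hzq', hz2]
      field_simp
    have hiff1 : z ^ (q+1) = 1 ↔ w ^ q * w = x := by
      rw [hzq, div_eq_one_iff_eq (mul_ne_zero hnqne hn'), hxdef,
        show (n':K) ^ (q+1) = n' ^ q * n' from pow_succ n' q,
        eq_div_iff (pow_ne_zero 2 ht'0)]
      constructor <;> intro h <;> linear_combination h
    rw [hiff1, hwq]
    constructor
    · intro h
      have hw01 : w * (T + 1) = 0 := by linear_combination h - hw2
      rcases mul_eq_zero.mp hw01 with h' | h'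
      · exact absurd h' hwne
      · linear_combination h' - h2K
    · intro h
      rw [h]
      linear_combination hw2 + w * h2K
  constructor
  · rintro ⟨ha, _⟩; exact (key z1 h1).mp ha
  · intro hT; exact ⟨(key z1 h1).mpr hT, (key z2 h2).mpr hT⟩
end

section
/- Let $q = 2^n$ with $n \geq 1$ and let $b'' \in \mu_{q+1} \setminus \{1\}$ (so $b''^{q+1} = 1$, $b'' \neq 1$). Define $A(z) = \frac{(b'' + b''^{-1})(z^2+1)}{(z^2 + b''^2)(z^2 + b''^{-2})}$ for $z \in \mathbb{F}_q$ with $z \neq 1$. Then the number of pairs $(x_1, z_1) \in \mathbb{F}_q^* \times \mathbb{F}_q$ with $x_1 \neq z_1$, $z_1 \neq 1$, and $\mathrm{Tr}_2^q(x_1 A(z_1)) = 1$ equals $\frac{q(q-1)}{2}$. -/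
open Polynomial Finset

-- cardinality of the fixed field {x : K | x^q = x} when card K = q^4
lemma aux_card_fix (K : Type*) [Field K] [Fintype K] [DecidableEq K] [CharP K 2]
    (n q : ℕ) (hn : 0 < n) (hq : q = 2 ^ n) (hK : Fintype.card K = q ^ 4) :
    (Finset.univ.filter (fun x : K => x ^ q = x)).card = q := by
  have hq1 : 1 < q := by subst hq; exact Nat.one_lt_two_pow hn.ne'
  have hPne : (X ^ q - X : K[X]) ≠ 0 := FiniteField.X_pow_card_sub_X_ne_zero K hq1
  have hsep : (X ^ q - X : K[X]).Separable :=
    galois_poly_separable 2 q (by subst hq; exact dvd_pow_self 2 hn.ne')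
  have hcard1 : 1 < Fintype.card K := Fintype.one_lt_card
  have hbigne : (X ^ Fintype.card K - X : K[X]) ≠ 0 :=
    FiniteField.X_pow_card_sub_X_ne_zero K hcard1
  have hdvd : (X ^ q - X : K[X]) ∣ X ^ Fintype.card K - X := by
    have h1 : q - 1 ∣ q ^ 4 - 1 := by
      simpa using Nat.sub_dvd_pow_sub_pow q 1 4
    obtain ⟨m, hm⟩ := h1
    have e1 : (X : K[X]) ^ q - X = X * (X ^ (q - 1) - 1) := by
      rw [mul_sub, mul_one, ← pow_succ']
      congr 2
      omega
    have e2 : (X : K[X]) ^ Fintype.card K - X = X * (X ^ (q ^ 4 - 1) - 1) := by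
      rw [mul_sub, mul_one, ← pow_succ', hK]
      congr 2
      have : 1 ≤ q ^ 4 := Nat.one_le_pow _ _ (by omega)
      omega
    have d3 : ((X : K[X]) ^ (q - 1) - 1) ∣ X ^ (q ^ 4 - 1) - 1 := by
      have := sub_dvd_pow_sub_pow ((X : K[X]) ^ (q - 1)) 1 m
      rwa [one_pow, ← pow_mul, ← hm] at this
    rw [e1, e2]
    exact mul_dvd_mul_left X d3
  have hsplit4 : ((X : K[X]) ^ Fintype.card K - X).Splits := by
    rw [splits_iff_card_roots, FiniteField.roots_X_pow_card_sub_X,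
      FiniteField.X_pow_card_sub_X_natDegree_eq K hcard1]
    simp [Finset.card_univ]
  have hsplit : ((X : K[X]) ^ q - X).Splits :=
    Splits.of_dvd hsplit4 hbigne hdvd
  have hroots : Multiset.card ((X : K[X]) ^ q - X).roots = q := by
    rw [splits_iff_card_roots.mp hsplit, FiniteField.X_pow_card_sub_X_natDegree_eq K hq1]
  have hfe : Finset.univ.filter (fun x : K => x ^ q = x)
      = ((X : K[X]) ^ q - X).roots.toFinset := by
    ext x
    simp [Multiset.mem_toFinset, mem_roots hPne, sub_eq_zero]
  rw [hfe, Multiset.toFinset_card_of_nodup (nodup_roots hsep), hroots]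

-- bound on the number of solutions of ∑ x^(2^i) = c
lemma aux_T_bound (K : Type*) [Field K] [Fintype K] [DecidableEq K] (n : ℕ) (hn : 0 < n)
    (c : K) :
    (Finset.univ.filter (fun x : K => ∑ i ∈ Finset.range n, x ^ 2 ^ i = c)).card
      ≤ 2 ^ (n - 1) := by
  set P : K[X] := (∑ i ∈ Finset.range n, X ^ 2 ^ i) - C c with hP
  have hcoeff : P.coeff (2 ^ (n - 1)) = 1 := by
    rw [hP, coeff_sub, finset_sum_coeff]
    have h0 : (C c).coeff (2 ^ (n - 1)) = 0 := by
      rw [coeff_C, if_neg (by positivity)]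
    rw [h0, sub_zero]
    rw [Finset.sum_eq_single (n - 1)]
    · rw [coeff_X_pow, if_pos rfl]
    · intro i _ hi
      rw [coeff_X_pow, if_neg]
      intro h
      exact hi (Nat.pow_right_injective le_rfl h.symm)
    · intro h
      exact absurd (Finset.mem_range.mpr (by omega)) h
  have hPne : P ≠ 0 := fun h => by simp [h] at hcoeff
  have hdeg : P.natDegree ≤ 2 ^ (n - 1) := by
    refine le_trans (natDegree_sub_le _ _) ?_
    refine max_le (le_trans (natDegree_sum_le _ _) ?_) (by simp)
    refine (Finset.fold_max_le _).mpr ⟨by positivity, ?_⟩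
    intro i hi
    simp only [Function.comp_apply, natDegree_X_pow]
    rw [Finset.mem_range] at hi
    exact Nat.pow_le_pow_right (by norm_num) (by omega)
  have hsub : Finset.univ.filter (fun x : K => ∑ i ∈ Finset.range n, x ^ 2 ^ i = c)
      ⊆ P.roots.toFinset := by
    intro x hx
    rw [Multiset.mem_toFinset, mem_roots hPne]
    simp only [Finset.mem_filter] at hx
    simp [hP, IsRoot, eval_finset_sum, hx.2, sub_eq_zero]
  calc _ ≤ P.roots.toFinset.card := Finset.card_le_card hsub
    _ ≤ Multiset.card P.roots := Multiset.toFinset_card_le _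
    _ ≤ P.natDegree := P.card_roots' 
    _ ≤ 2 ^ (n - 1) := hdeg

/-- For `b'' ∈ μ_{q+1} \ {1}` and
`A(z) = (b''+b''⁻¹)(z²+1)/((z²+b''²)(z²+b''⁻²))`, the number of pairs
`(x₁, z₁) ∈ 𝔽_qˣ × 𝔽_q` with `x₁ ≠ z₁`, `z₁ ≠ 1`, `Tr_2^q(x₁A(z₁)) = 1`
is `q(q-1)/2`. -/
theorem stmt16 (n : ℕ) (hn : 0 < n) (q : ℕ) (hq : q = 2 ^ n)
    (K : Type*) [Field K] [Fintype K] (hK : Fintype.card K = q ^ 4)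
    (b'' : K) (hb : b'' ^ (q + 1) = 1) (hb1 : b'' ≠ 1) :
    {p : K × K |
        p.1 ^ q = p.1 ∧ p.1 ≠ 0 ∧ p.2 ^ q = p.2 ∧ p.2 ≠ 1 ∧ p.1 ≠ p.2 ∧
        (∑ i ∈ Finset.range n,
          (p.1 * ((b'' + b''⁻¹) * (p.2 ^ 2 + 1) /
            ((p.2 ^ 2 + b'' ^ 2) * (p.2 ^ 2 + (b''⁻¹) ^ 2)))) ^ 2 ^ i) = 1}.ncard
      = q * (q - 1) / 2 := by
  classical
  -- characteristic 2
  haveI hchar : CharP K 2 := by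
    obtain ⟨p, hc⟩ := CharP.exists K
    haveI := hc
    obtain ⟨m, hpp, hcard⟩ := FiniteField.card K p
    have hcard2 : Fintype.card K = 2 ^ (n * 4) := by rw [hK, hq, ← pow_mul]
    have hdvd : p ∣ 2 ^ (n * 4) := by
      rw [← hcard2, hcard]
      exact dvd_pow_self p m.ne_zero
    have hp2 : p = 2 :=
      (Nat.prime_dvd_prime_iff_eq hpp Nat.prime_two).mp (hpp.dvd_of_dvd_pow hdvd)
    rwa [hp2] at hc
  have h2K : (2 : K) = 0 := by
    have := CharP.cast_eq_zero K 2
    exact_mod_cast this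
  -- basic b'' facts
  have hb0 : b'' ≠ 0 := by
    intro h; rw [h, zero_pow (by omega)] at hb; exact zero_ne_one hb
  have hbq : b'' ^ q = b''⁻¹ := by
    rw [inv_eq_one_div, eq_div_iff hb0, ← pow_succ]; exact hb
  have hbb : b'' * b''⁻¹ = 1 := mul_inv_cancel₀ hb0
  have hbne : b''⁻¹ ≠ b'' := by
    intro h
    rw [h] at hbb
    apply hb1
    have hsq : (b'' + 1) ^ 2 = 0 := by
      rw [CharTwo.add_sq, one_pow, pow_two, hbb, CharTwo.add_self_eq_zero]
    have := pow_eq_zero_iff (n := 2) (by norm_num) |>.mp hsq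
    have : b'' = -1 := eq_neg_of_add_eq_zero_left this
    rwa [CharTwo.neg_eq] at this
  have hbinvq : (b''⁻¹) ^ q = b'' := by rw [inv_pow, hbq, inv_inv]
  have hfrobadd : ∀ x y : K, (x + y) ^ q = x ^ q + y ^ q := fun x y => by
    rw [hq]; exact add_pow_char_pow ..
  have hs0 : b'' + b''⁻¹ ≠ 0 := by
    intro h
    have : b''⁻¹ = -b'' := eq_neg_of_add_eq_zero_right h
    rw [CharTwo.neg_eq] at this
    exact hbne this
  -- the trace map
  set T : K → K := fun x => ∑ i ∈ Finset.range n, x ^ 2 ^ i with hT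
  set A : K → K := fun z => (b'' + b''⁻¹) * (z ^ 2 + 1) /
      ((z ^ 2 + b'' ^ 2) * (z ^ 2 + (b''⁻¹) ^ 2)) with hA
  have hTadd : ∀ x y : K, T (x + y) = T x + T y := by
    intro x y
    simp only [hT]
    rw [← Finset.sum_add_distrib]
    exact Finset.sum_congr rfl fun i _ => add_pow_char_pow ..
  have hT0 : T 0 = 0 := by
    simp only [hT]
    exact Finset.sum_eq_zero fun i _ => zero_pow (by positivity)
  have hTfrob : ∀ x : K, x ^ q = x → T (x ^ 2) = T x := by
    intro x hx
    have h1 : ∀ i, (x ^ 2) ^ 2 ^ i = x ^ 2 ^ (i + 1) := fun i => by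
      rw [← pow_mul, pow_succ, Nat.mul_comm]
    have hcalc : T (x ^ 2) = ∑ i ∈ Finset.range n, x ^ 2 ^ (i + 1) := by
      simp only [hT]
      exact Finset.sum_congr rfl fun i _ => h1 i
    have h2 := Finset.sum_range_succ' (fun i => x ^ 2 ^ i) n
    have h3 := Finset.sum_range_succ (fun i => x ^ 2 ^ i) n
    rw [h3] at h2
    have hxq : x ^ 2 ^ n = x := by rw [← hq]; exact hx
    rw [hxq, pow_zero, pow_one] at h2
    -- h2 : T x + x = (∑ i in range n, x ^ 2 ^ (i+1)) + x
    simp only [hT] at hcalc ⊢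
    rw [hcalc]
    exact (add_right_cancel h2).symm
  have hTsq : ∀ x : K, (T x) ^ 2 = T (x ^ 2) := by
    intro x
    simp only [hT]
    rw [sum_pow_char]
    exact Finset.sum_congr rfl fun i _ => by rw [← pow_mul, ← pow_mul, Nat.mul_comm]
  have hT01 : ∀ x : K, x ^ q = x → T x = 0 ∨ T x = 1 := by
    intro x hx
    have h := hTsq x
    rw [hTfrob x hx] at h
    have h2' : T x * (T x - 1) = 0 := by linear_combination h
    rcases mul_eq_zero.mp h2' with h0 | h1'
    · exact Or.inl h0
    · exact Or.inr (sub_eq_zero.mp h1')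
  -- fixed field F
  have hFcard : (Finset.univ.filter (fun x : K => x ^ q = x)).card = q :=
    aux_card_fix K n q hn hq hK
  -- the count of T = 1 elements
  have hGcard : (Finset.univ.filter (fun y : K => y ^ q = y ∧ T y = 1)).card = 2 ^ (n - 1) := by
    have hsplit := Finset.card_filter_add_card_filter_not
      (s := Finset.univ.filter (fun x : K => x ^ q = x)) (p := fun y => T y = 1)
    rw [Finset.filter_filter, Finset.filter_filter, hFcard] at hsplit
    have hneg : (Finset.univ.filter (fun y : K => y ^ q = y ∧ ¬ T y = 1))
        = Finset.univ.filter (fun y : K => y ^ q = y ∧ T y = 0) := by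
      ext y
      simp only [Finset.mem_filter, Finset.mem_univ, true_and]
      constructor
      · rintro ⟨hy, hny⟩
        exact ⟨hy, (hT01 y hy).resolve_right hny⟩
      · rintro ⟨hy, h0⟩
        refine ⟨hy, ?_⟩
        rw [h0]
        exact zero_ne_one
    rw [hneg] at hsplit
    have hb1' : (Finset.univ.filter (fun y : K => y ^ q = y ∧ T y = 1)).card ≤ 2 ^ (n - 1) := by
      refine le_trans (Finset.card_le_card ?_) (aux_T_bound K n hn 1)
      intro y hy
      simp only [Finset.mem_filter, Finset.mem_univ, true_and, hT] at hy ⊢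
      exact hy.2
    have hb0' : (Finset.univ.filter (fun y : K => y ^ q = y ∧ T y = 0)).card ≤ 2 ^ (n - 1) := by
      refine le_trans (Finset.card_le_card ?_) (aux_T_bound K n hn 0)
      intro y hy
      simp only [Finset.mem_filter, Finset.mem_univ, true_and, hT] at hy ⊢
      exact hy.2
    have hqsplit : q = 2 ^ (n - 1) + 2 ^ (n - 1) := by
      rw [hq, ← two_mul, ← pow_succ']
      congr 1
      omega
    omega
  -- z-dependent facts
  have hzfacts : ∀ z : K, z ^ q = z → z ≠ 1 →
      (A z) ^ q = A z ∧ A z ≠ 0 ∧ T (z * A z) = 0 := by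
    intro z hz hz1
    have hzb : z + b'' ≠ 0 := by
      intro h
      have h' : z = b'' := by
        have := eq_neg_of_add_eq_zero_left h
        rwa [CharTwo.neg_eq] at this
      rw [h'] at hz
      rw [hbq] at hz
      exact hbne hz
    have hzc : z + b''⁻¹ ≠ 0 := by
      intro h
      have h' : z = b''⁻¹ := by
        have := eq_neg_of_add_eq_zero_left h
        rwa [CharTwo.neg_eq] at this
      rw [h'] at hz
      rw [hbinvq] at hz
      exact hbne hz.symm
    have hz1' : z + 1 ≠ 0 := by
      intro h
      have := eq_neg_of_add_eq_zero_left h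
      rw [CharTwo.neg_eq] at this
      exact hz1 this
    have hden1 : z ^ 2 + b'' ^ 2 ≠ 0 := by
      rw [← CharTwo.add_sq]; exact pow_ne_zero 2 hzb
    have hden2 : z ^ 2 + (b''⁻¹) ^ 2 ≠ 0 := by
      rw [← CharTwo.add_sq]; exact pow_ne_zero 2 hzc
    have hnum : z ^ 2 + 1 ≠ 0 := by
      have : z ^ 2 + 1 = (z + 1) ^ 2 := by rw [CharTwo.add_sq, one_pow]
      rw [this]; exact pow_ne_zero 2 hz1'
    have hpowq : ∀ w : K, w ^ q = w → (w ^ 2) ^ q = w ^ 2 := fun w hw => by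
      rw [← pow_mul, Nat.mul_comm, pow_mul, hw]
    have hzsq : (z ^ 2) ^ q = z ^ 2 := hpowq z hz
    have e1 : (z ^ 2 + 1) ^ q = z ^ 2 + 1 := by rw [hfrobadd, one_pow, hzsq]
    have hbsq : (b'' ^ 2) ^ q = (b''⁻¹) ^ 2 := by
      rw [← pow_mul, Nat.mul_comm, pow_mul, hbq]
    have hcsq : ((b''⁻¹) ^ 2) ^ q = b'' ^ 2 := by
      rw [← pow_mul, Nat.mul_comm, pow_mul, hbinvq]
    have e2 : (z ^ 2 + b'' ^ 2) ^ q = z ^ 2 + (b''⁻¹) ^ 2 := by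
      rw [hfrobadd, hzsq, hbsq]
    have e3 : (z ^ 2 + (b''⁻¹) ^ 2) ^ q = z ^ 2 + b'' ^ 2 := by
      rw [hfrobadd, hzsq, hcsq]
    have e4 : (b'' + b''⁻¹) ^ q = b'' + b''⁻¹ := by
      rw [hfrobadd, hbq, hbinvq, add_comm]
    have hAfix : (A z) ^ q = A z := by
      simp only [hA]
      rw [div_pow, mul_pow, mul_pow, e1, e2, e3, e4, mul_comm (z ^ 2 + (b''⁻¹) ^ 2)]
    have hAne : A z ≠ 0 := by
      simp only [hA]
      exact div_ne_zero (mul_ne_zero hs0 hnum) (mul_ne_zero hden1 hden2)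
    refine ⟨hAfix, hAne, ?_⟩
    have hDne : z ^ 2 + (b'' + b''⁻¹) * z + 1 ≠ 0 := by
      have hfact : (z + b'') * (z + b''⁻¹) = z ^ 2 + (b'' + b''⁻¹) * z + 1 := by
        linear_combination hbb
      rw [← hfact]
      exact mul_ne_zero hzb hzc
    set g : K := (z ^ 2 + 1) / (z ^ 2 + (b'' + b''⁻¹) * z + 1) with hg
    have hgq : g ^ q = g := by
      rw [hg, div_pow, e1]
      congr 1
      rw [hfrobadd, hfrobadd, one_pow, hzsq, mul_pow, e4, hz]
    have hDsq : (z ^ 2 + b'' ^ 2) * (z ^ 2 + (b''⁻¹) ^ 2)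
        = (z ^ 2 + (b'' + b''⁻¹) * z + 1) ^ 2 := by
      have hfact : (z + b'') * (z + b''⁻¹) = z ^ 2 + (b'' + b''⁻¹) * z + 1 := by
        linear_combination hbb
      calc (z ^ 2 + b'' ^ 2) * (z ^ 2 + (b''⁻¹) ^ 2)
          = (z + b'') ^ 2 * (z + b''⁻¹) ^ 2 := by rw [CharTwo.add_sq, CharTwo.add_sq]
        _ = ((z + b'') * (z + b''⁻¹)) ^ 2 := by rw [mul_pow]
        _ = _ := by rw [hfact]
    have hnumid : (b'' + b''⁻¹) * z * (z ^ 2 + 1)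
        = (z ^ 2 + 1) * (z ^ 2 + (b'' + b''⁻¹) * z + 1) + (z ^ 2 + 1) ^ 2 := by
      linear_combination (-(z ^ 2 + 1) ^ 2) * h2K
    have hkey : z * A z = g + g ^ 2 := by
      simp only [hA, hg]
      rw [div_pow, div_add_div _ _ hDne (pow_ne_zero 2 hDne), mul_div_assoc',
        div_eq_div_iff (mul_ne_zero hden1 hden2)
          (mul_ne_zero hDne (pow_ne_zero 2 hDne)), hDsq]
      linear_combination (z ^ 2 + (b'' + b''⁻¹) * z + 1) ^ 3 * hnumid
    rw [hkey, hTadd g (g ^ 2), hTfrob g hgq, CharTwo.add_self_eq_zero]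
  -- convert the set to a Finset
  set S' : Finset (K × K) := Finset.univ.filter (fun p : K × K =>
      p.1 ^ q = p.1 ∧ p.1 ≠ 0 ∧ p.2 ^ q = p.2 ∧ p.2 ≠ 1 ∧ p.1 ≠ p.2 ∧
        T (p.1 * A p.2) = 1) with hS'
  have hsetF : {p : K × K |
        p.1 ^ q = p.1 ∧ p.1 ≠ 0 ∧ p.2 ^ q = p.2 ∧ p.2 ≠ 1 ∧ p.1 ≠ p.2 ∧
        (∑ i ∈ Finset.range n,
          (p.1 * ((b'' + b''⁻¹) * (p.2 ^ 2 + 1) /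
            ((p.2 ^ 2 + b'' ^ 2) * (p.2 ^ 2 + (b''⁻¹) ^ 2)))) ^ 2 ^ i) = 1} = ↑S' := by
    ext p
    simp only [hS', Set.mem_setOf_eq, Finset.coe_filter, Finset.mem_univ, true_and, hT, hA]
  rw [hsetF, Set.ncard_coe_finset]
  -- fiberwise decomposition
  have hfib : S'.card = ∑ z : K, (Finset.univ.filter (fun x : K =>
      x ^ q = x ∧ x ≠ 0 ∧ z ^ q = z ∧ z ≠ 1 ∧ x ≠ z ∧ T (x * A z) = 1)).card := by
    rw [Finset.card_eq_sum_card_fiberwise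
      (f := fun p : K × K => p.2) (t := Finset.univ) (fun p _ => Finset.mem_univ p.2)]
    refine Finset.sum_congr rfl fun z _ => ?_
    refine Finset.card_nbij' Prod.fst (fun x => (x, z)) ?_ ?_ ?_ ?_
    · intro p hp
      simp only [Finset.mem_coe, hS', Finset.mem_filter, Finset.mem_univ, true_and] at hp ⊢
      obtain ⟨⟨h1, h2, h3, h4, h5, h6⟩, hzz⟩ := hp
      subst hzz
      exact ⟨h1, h2, h3, h4, h5, h6⟩
    · intro x hx
      simp only [Finset.mem_coe, hS', Finset.mem_filter, Finset.mem_univ, true_and] at hx ⊢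
      obtain ⟨h1, h2, h3, h4, h5, h6⟩ := hx
      exact ⟨⟨h1, h2, h3, h4, h5, h6⟩, trivial⟩
    · intro p hp
      simp only [Finset.mem_coe, hS', Finset.mem_filter] at hp
      exact Prod.ext rfl hp.2.symm
    · intro x _
      rfl
  rw [hfib]
  -- evaluate each fiber
  have hinner : ∀ z : K, (Finset.univ.filter (fun x : K =>
      x ^ q = x ∧ x ≠ 0 ∧ z ^ q = z ∧ z ≠ 1 ∧ x ≠ z ∧ T (x * A z) = 1)).card
      = if z ^ q = z ∧ z ≠ 1 then 2 ^ (n - 1) else 0 := by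
    intro z
    by_cases hzg : z ^ q = z ∧ z ≠ 1
    · rw [if_pos hzg]
      obtain ⟨hz, hz1⟩ := hzg
      obtain ⟨hAfix, hAne, hTz0⟩ := hzfacts z hz hz1
      rw [← hGcard]
      refine Finset.card_nbij' (fun x => x * A z) (fun y => y * (A z)⁻¹) ?_ ?_ ?_ ?_
      · intro x hx
        simp only [Finset.mem_coe, Finset.mem_filter, Finset.mem_univ, true_and] at hx ⊢
        obtain ⟨h1, _, _, _, _, h6⟩ := hx
        exact ⟨by rw [mul_pow, h1, hAfix], h6⟩
      · intro y hy
        simp only [Finset.mem_coe, Finset.mem_filter, Finset.mem_univ, true_and] at hy ⊢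
        obtain ⟨h1, h2⟩ := hy
        have hy0 : y ≠ 0 := by
          intro h
          rw [h, hT0] at h2
          exact zero_ne_one h2
        have hAinvq : ((A z)⁻¹) ^ q = (A z)⁻¹ := by rw [inv_pow, hAfix]
        refine ⟨by rw [mul_pow, h1, hAinvq], mul_ne_zero hy0 (inv_ne_zero hAne), hz, hz1,
          ?_, by rw [mul_assoc, inv_mul_cancel₀ hAne, mul_one]; exact h2⟩
        intro h
        have hyz : y = z * A z := by
          have h' := congrArg (· * A z) h
          simpa [mul_assoc, inv_mul_cancel₀ hAne] using h'
        rw [hyz, hTz0] at h2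
        exact one_ne_zero h2.symm
      · intro x hx
        simp only [mul_assoc, mul_inv_cancel₀ hAne, mul_one]
      · intro y hy
        simp only [mul_assoc, inv_mul_cancel₀ hAne, mul_one]
    · rw [if_neg hzg]
      rw [Finset.card_eq_zero, Finset.filter_eq_empty_iff]
      intro x _
      tauto
  rw [Finset.sum_congr rfl fun z _ => hinner z]
  rw [Finset.sum_ite, Finset.sum_const_zero, add_zero, Finset.sum_const, smul_eq_mul]
  -- count of good z
  have hzcard : (Finset.univ.filter (fun z : K => z ^ q = z ∧ z ≠ 1)).card = q - 1 := by
    have : Finset.univ.filter (fun z : K => z ^ q = z ∧ z ≠ 1)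
        = (Finset.univ.filter (fun z : K => z ^ q = z)).erase 1 := by
      rw [← Finset.filter_filter, Finset.filter_ne']
    rw [this, Finset.card_erase_of_mem (by simp), hFcard]
  rw [hzcard]
  -- arithmetic
  have h2k : q = 2 * 2 ^ (n - 1) := by
    rw [hq, ← pow_succ']
    congr 1
    omega
  have hmul : q * (q - 1) = 2 * ((q - 1) * 2 ^ (n - 1)) := by
    rw [h2k]
    ring
  rw [hmul, Nat.mul_div_cancel_left _ (by norm_num : 0 < 2)]
end
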